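/- arXiv:1207.5122 — 2 statements merged into one kernel-verified Lean document; each statement's English description precedes it below -/
import Mathlib

section
/- A minimal counterexample to the SOCDC conjecture has no non-trivial edge cut of size 3. That is, if G is a 2-connected simple graph, G ∉ {K_4, K_6}, G has no SOCDC, and every 2-connected simple graph H ∉ {K_4, K_6} with |V(H)| + |E(H)| < |V(G)| + |E(G)| has an SOCDC, then every edge cut of G of size 3 isolates a single vertex. -/
open SimpleGraph

/-- The list of arcs of a cyclically-read list of vertices:
`[(l₀,l₁), (l₁,l₂), …, (lₙ₋₁,l₀)]`. -/
def cycleArcs {V : Type*} (l : List V) : List (V × V) := l.zip (l.rotate 1)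

/-- `l` represents a directed cycle of the symmetric orientation of `G`:
a cyclic sequence of at least three pairwise distinct vertices with consecutive
vertices adjacent (cyclically). -/
def IsDirCycle {V : Type*} (G : SimpleGraph V) (l : List V) : Prop :=
  3 ≤ l.length ∧ l.Nodup ∧ ∀ p ∈ cycleArcs l, G.Adj p.1 p.2

/-- An oriented cycle double cover of `G` : a collection of directed cycles of the
symmetric orientation of `G` such that each arc `(u,v)` (with `u ~ v` in `G`) lies
in exactly one of the cycles. -/
def IsOCDC {V : Type*} (G : SimpleGraph V) (C : Finset (List V)) : Prop :=
  (∀ l ∈ C, IsDirCycle G l) ∧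
    ∀ u v : V, G.Adj u v → ∃! l : List V, l ∈ C ∧ (u, v) ∈ cycleArcs l

/-- `G` (a graph with vertex set of size `n`) has a small oriented cycle double cover:
an OCDC with at most `n - 1` directed cycles. -/
def HasSOCDC {V : Type*} (G : SimpleGraph V) : Prop :=
  ∃ C : Finset (List V), IsOCDC G C ∧ C.card ≤ Nat.card V - 1

/-- `l` represents a directed path of the symmetric orientation of `G`. -/
def IsDirPath {V : Type*} (G : SimpleGraph V) (l : List V) : Prop :=
  l ≠ [] ∧ l.Nodup ∧ l.Chain' G.Adj

/-- An oriented perfect path double cover of `G`: a collection of directed paths of the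
symmetric orientation of `G` such that each arc lies in exactly one path, and every
vertex occurs exactly once as the start and exactly once as the end of a path. -/
def IsOPPDC {V : Type*} (G : SimpleGraph V) (P : Finset (List V)) : Prop :=
  (∀ l ∈ P, IsDirPath G l) ∧
    (∀ u v : V, G.Adj u v → ∃! l : List V, l ∈ P ∧ (u, v) ∈ l.zip l.tail) ∧
    (∀ v : V, ∃! l : List V, l ∈ P ∧ l.head? = some v) ∧
    (∀ v : V, ∃! l : List V, l ∈ P ∧ l.getLast? = some v)

/-- `G` is `2`-connected: it has at least three vertices and deleting any single
vertex leaves a connected graph. -/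
def TwoConnected {V : Type*} (G : SimpleGraph V) : Prop :=
  3 ≤ Nat.card V ∧ ∀ v : V, (G.induce {u | u ≠ v}).Connected

/-- `G` is a minimal counterexample to the SOCDC conjecture: `G` is a `2`-connected
graph other than `K₄` and `K₆` with no SOCDC, while every `2`-connected graph other
than `K₄` and `K₆` with smaller `|V| + |E|` has an SOCDC. -/
def MinimalCounterexample {V : Type} (G : SimpleGraph V) : Prop :=
  TwoConnected G ∧
    ¬ Nonempty (G ≃g (⊤ : SimpleGraph (Fin 4))) ∧
    ¬ Nonempty (G ≃g (⊤ : SimpleGraph (Fin 6))) ∧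
    ¬ HasSOCDC G ∧
    ∀ (W : Type) [Finite W] (H : SimpleGraph W),
      TwoConnected H →
      ¬ Nonempty (H ≃g (⊤ : SimpleGraph (Fin 4))) →
      ¬ Nonempty (H ≃g (⊤ : SimpleGraph (Fin 6))) →
      Nat.card W + Nat.card H.edgeSet < Nat.card V + Nat.card G.edgeSet →
      HasSOCDC H

/-- The edge cut determined by a set `S` of vertices: the set of edges of `G` having
one endpoint in `S` and the other outside `S`. -/
def crossingEdges {V : Type*} (G : SimpleGraph V) (S : Set V) : Set (Sym2 V) :=
  {e | e ∈ G.edgeSet ∧ ∃ x y : V, e = s(x, y) ∧ x ∈ S ∧ y ∉ S}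


def pArcs {α : Type*} (l : List α) : List (α × α) := l.zip l.tail

namespace CutAux
variable {α β : Type*}

variable {α β : Type*}

lemma zip_snoc (a : α) (t : List α) (x : α) :
    (a :: t).zip (t ++ [x]) = (a :: t).zip t ++ [((a :: t).getLast (by simp), x)] := by
  induction t generalizing a with
  | nil => simp
  | cons b t ih =>
      simp only [List.cons_append, List.zip_cons_cons]
      rw [ih b]
      simp

lemma cycleArcs_eq (l : List α) (h : l ≠ []) :
    cycleArcs l = pArcs l ++ [(l.getLast h, l.head h)] := by
  obtain ⟨a, t, rfl⟩ := List.exists_cons_of_ne_nil h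
  have : (a :: t).rotate 1 = t ++ [a] := by
    rw [List.rotate_cons_succ, List.rotate_zero]
  rw [cycleArcs, this, zip_snoc]
  rfl

lemma pArcs_cons_cons (a b : α) (t : List α) :
    pArcs (a :: b :: t) = (a, b) :: pArcs (b :: t) := rfl

lemma pArcs_append (xs ys : List α) (hx : xs ≠ []) (hy : ys ≠ []) :
    pArcs (xs ++ ys) = pArcs xs ++ (xs.getLast hx, ys.head hy) :: pArcs ys := by
  induction xs with
  | nil => simp at hx
  | cons a t ih =>
      cases t with
      | nil =>
          obtain ⟨c, u, rfl⟩ := List.exists_cons_of_ne_nil hy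
          simp [pArcs]
      | cons b t' =>
          have h2 : (b :: t') ++ ys ≠ [] := by simp
          have : pArcs ((a :: b :: t') ++ ys) = (a, b) :: pArcs ((b :: t') ++ ys) := rfl
          rw [this, ih (by simp)]
          simp [pArcs_cons_cons]

lemma mem_pArcs_left {u v : α} {l : List α} (h : (u, v) ∈ pArcs l) : u ∈ l :=
  (List.of_mem_zip h).1

lemma mem_pArcs_right {u v : α} {l : List α} (h : (u, v) ∈ pArcs l) : v ∈ l := by
  have := (List.of_mem_zip h).2
  exact List.mem_of_mem_tail this

lemma mem_cycleArcs_left {u v : α} {l : List α} (h : (u, v) ∈ cycleArcs l) : u ∈ l :=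
  (List.of_mem_zip h).1

lemma mem_cycleArcs_right {u v : α} {l : List α} (h : (u, v) ∈ cycleArcs l) : v ∈ l := by
  have := (List.of_mem_zip h).2
  rw [List.mem_rotate] at this
  exact this

lemma pArcs_subset_cycleArcs {l : List α} : pArcs l ⊆ cycleArcs l := by
  rcases eq_or_ne l [] with rfl | h
  · simp [pArcs, cycleArcs]
  · rw [cycleArcs_eq l h]; exact fun x hx => List.mem_append_left _ hx

lemma pArcs_map (f : α → β) (l : List α) :
    pArcs (l.map f) = (pArcs l).map (Prod.map f f) := by
  rw [pArcs, pArcs, ← List.map_tail, List.zip_map]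

lemma cycleArcs_map (f : α → β) (l : List α) :
    cycleArcs (l.map f) = (cycleArcs l).map (Prod.map f f) := by
  rw [cycleArcs, cycleArcs, ← List.map_rotate, List.zip_map]

lemma chain'_of_pArcs {R : α → α → Prop} {l : List α}
    (h : ∀ p ∈ pArcs l, R p.1 p.2) : l.Chain' R := by
  induction l with
  | nil => exact List.isChain_nil
  | cons a t ih =>
      cases t with
      | nil => exact List.isChain_singleton _
      | cons b u =>
          refine List.isChain_cons_cons.2 ⟨h (a, b) (by simp [pArcs_cons_cons]), ih ?_⟩
          intro p hp
          exact h p (by rw [pArcs_cons_cons]; exact List.mem_cons_of_mem _ hp)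

lemma pArcs_of_chain' {R : α → α → Prop} {l : List α}
    (h : l.Chain' R) : ∀ p ∈ pArcs l, R p.1 p.2 := by
  induction l with
  | nil => simp [pArcs]
  | cons a t ih =>
      cases t with
      | nil => simp [pArcs]
      | cons b u =>
          rw [show List.Chain' R (a :: b :: u) ↔ _ from List.isChain_cons_cons] at h
          intro p hp
          rw [pArcs_cons_cons, List.mem_cons] at hp
          rcases hp with rfl | hp
          · exact h.1
          · exact ih h.2 p hp



variable {α β : Type*}

lemma zip_truncate (xs zs ys : List α) (h : zs.length ≤ xs.length) :
    (xs ++ ys).zip zs = xs.zip zs := by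
  induction xs generalizing zs with
  | nil => cases zs <;> simp_all
  | cons a t ih =>
      cases zs with
      | nil => simp
      | cons c u =>
          simp only [List.cons_append, List.zip_cons_cons]
          rw [ih u (by simpa using h)]

lemma cycleArcs_rotate_one (l : List α) :
    cycleArcs (l.rotate 1) = (cycleArcs l).rotate 1 := by
  match l with
  | [] => simp [cycleArcs]
  | [a] => simp [cycleArcs]
  | a :: b :: t =>
      have h1 : (a :: b :: t).rotate 1 = b :: (t ++ [a]) := by
        rw [List.rotate_cons_succ, List.rotate_zero]; simp
      have h2 : (b :: (t ++ [a])).rotate 1 = (t ++ [a]) ++ [b] := by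
        rw [List.rotate_cons_succ, List.rotate_zero]
      unfold cycleArcs
      rw [h1, h2]
      have h3 : (b :: (t ++ [a])).zip ((t ++ [a]) ++ [b])
          = (b :: (t ++ [a])).zip (t ++ [a]) ++ [((b :: (t ++ [a])).getLast (by simp), b)] := by
        have := zip_snoc b (t ++ [a]) b
        simpa using this
      rw [h3]
      have h4 : (b :: (t ++ [a])).getLast (by simp) = a := by
        simp
      have h5 : (b :: (t ++ [a])).zip (t ++ [a]) = (b :: t).zip (t ++ [a]) := by
        have := zip_truncate (b :: t) (t ++ [a]) [a] (by simp)
        simpa using this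
      rw [h4, h5]
      have h6 : (a :: b :: t).zip (b :: (t ++ [a])) = (a, b) :: (b :: t).zip (t ++ [a]) := rfl
      rw [h6, List.rotate_cons_succ, List.rotate_zero]

lemma cycleArcs_rotate (l : List α) (n : ℕ) :
    cycleArcs (l.rotate n) = (cycleArcs l).rotate n := by
  induction n with
  | zero => simp
  | succ n ih =>
      have : l.rotate (n + 1) = (l.rotate n).rotate 1 := by rw [List.rotate_rotate]
      rw [this, cycleArcs_rotate_one, ih, List.rotate_rotate]

lemma mem_cycleArcs_rotate {p : α × α} (l : List α) (n : ℕ) :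
    p ∈ cycleArcs (l.rotate n) ↔ p ∈ cycleArcs l := by
  rw [cycleArcs_rotate, List.mem_rotate]

lemma exists_rotate_cons {y : α} {l : List α} (h : y ∈ l) :
    ∃ n q, l.rotate n = y :: q := by
  obtain ⟨s, t, rfl⟩ := List.append_of_mem h
  refine ⟨s.length, t ++ s, ?_⟩
  rw [List.rotate_eq_drop_append_take (by simp)]
  simp

lemma pArcs_reverse (l : List α) :
    pArcs l.reverse = ((pArcs l).map Prod.swap).reverse := by
  induction l with
  | nil => simp [pArcs]
  | cons a t ih =>
      cases t with
      | nil => simp [pArcs]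
      | cons b u =>
          have h1 : (a :: b :: u).reverse = (b :: u).reverse ++ [a] := by simp
          rw [h1]
          have hrev : (b :: u).reverse ≠ [] := by simp
          have h2 : pArcs ((b :: u).reverse ++ [a])
              = pArcs ((b :: u).reverse) ++ ((b :: u).reverse.getLast hrev, a) :: pArcs [a] := by
            exact pArcs_append _ _ hrev (by simp)
          have h3 : (b :: u).reverse.getLast hrev = b := by
            rw [List.getLast_reverse]; rfl
          rw [h2, h3, ih]
          simp [pArcs]

lemma mem_pArcs_reverse {u v : α} (l : List α) :
    (u, v) ∈ pArcs l.reverse ↔ (v, u) ∈ pArcs l := by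
  rw [pArcs_reverse, List.mem_reverse, List.mem_map]
  constructor
  · rintro ⟨⟨x, y⟩, hm, he⟩
    simp only [Prod.swap_prod_mk, Prod.mk.injEq] at he
    obtain ⟨rfl, rfl⟩ := he
    exact hm
  · intro hm
    exact ⟨(v, u), hm, rfl⟩

lemma cycleArcs_eq' (l : List α) (h : l ≠ []) :
    cycleArcs l = pArcs l ++ [(l.getLast h, l.head h)] := by
  obtain ⟨a, t, rfl⟩ := List.exists_cons_of_ne_nil h
  have : (a :: t).rotate 1 = t ++ [a] := by
    rw [List.rotate_cons_succ, List.rotate_zero]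
  rw [cycleArcs, this, zip_snoc]
  rfl

lemma mem_cycleArcs_reverse {u v : α} (l : List α) (h : l ≠ []) :
    (u, v) ∈ cycleArcs l.reverse ↔ (v, u) ∈ cycleArcs l := by
  have hr : l.reverse ≠ [] := by simpa using h
  rw [cycleArcs_eq' l.reverse hr, cycleArcs_eq' l h]
  simp only [List.mem_append, List.mem_singleton, Prod.mk.injEq]
  rw [mem_pArcs_reverse, List.head_reverse, List.getLast_reverse]
  tauto



variable {α β : Type*}
lemma pArcs_nil : pArcs (α := α) [] = [] := rfl
lemma pArcs_singleton (a : α) : pArcs [a] = [] := rfl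

lemma cycleArcs_cons (y : α) (q : List α) (hq : q ≠ []) :
    cycleArcs (y :: q) = (y, q.head hq) :: (pArcs q ++ [(q.getLast hq, y)]) := by
  rw [cycleArcs_eq' (y :: q) (by simp)]
  obtain ⟨b, u, rfl⟩ := List.exists_cons_of_ne_nil hq
  rw [pArcs_cons_cons]
  simp

lemma mem_cycleArcs_cons_iff {u v y : α} {q : List α} (hq : q ≠ []) :
    (u, v) ∈ cycleArcs (y :: q) ↔
      (u = y ∧ v = q.head hq) ∨ (u, v) ∈ pArcs q ∨ (u = q.getLast hq ∧ v = y) := by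
  rw [cycleArcs_cons y q hq]
  simp only [List.mem_cons, List.mem_append, List.mem_singleton, Prod.mk.injEq]
  tauto

lemma mem_cycleArcs_append_iff {u v : α} {xs ys : List α} (hx : xs ≠ []) (hy : ys ≠ []) :
    (u, v) ∈ cycleArcs (xs ++ ys) ↔
      (u, v) ∈ pArcs xs ∨ (u = xs.getLast hx ∧ v = ys.head hy) ∨
      (u, v) ∈ pArcs ys ∨ (u = ys.getLast hy ∧ v = xs.head hx) := by
  have hne : xs ++ ys ≠ [] := by simp [hx]
  rw [cycleArcs_eq' _ hne, pArcs_append xs ys hx hy]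
  rw [List.getLast_append_of_ne_nil _ hy, List.head_append_of_ne_nil hx]
  simp only [List.mem_append, List.mem_cons, List.mem_singleton, Prod.mk.injEq]
  tauto

/-- symmetric relations: reflexive transitive closure is symmetric -/
lemma rtg_symm {R : α → α → Prop} (hs : ∀ x y, R x y → R y x) {u w : α}
    (h : Relation.ReflTransGen R u w) : Relation.ReflTransGen R w u := by
  induction h with
  | refl => exact Relation.ReflTransGen.refl
  | tail _ h2 ih => exact Relation.ReflTransGen.head (hs _ _ h2) ih

lemma reachable_induce_of_rtg {W : Type*} (H : SimpleGraph W) (s : Set W)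
    {u w : W} (hu : u ∈ s) (hw : w ∈ s)
    (h : Relation.ReflTransGen (fun x y => x ∈ s ∧ y ∈ s ∧ H.Adj x y) u w) :
    (H.induce s).Reachable ⟨u, hu⟩ ⟨w, hw⟩ := by
  induction h using Relation.ReflTransGen.head_induction_on with
  | refl => rfl
  | head hr _ ih =>
      exact Reachable.trans (SimpleGraph.Adj.reachable
        (show (H.induce s).Adj ⟨_, hr.1⟩ ⟨_, hr.2.1⟩ from hr.2.2)) (ih hr.2.1)

lemma rtg_of_reachable {W : Type*} (H : SimpleGraph W) (s : Set W) {u w : ↥s}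
    (h : (H.induce s).Reachable u w) :
    Relation.ReflTransGen (fun x y => x ∈ s ∧ y ∈ s ∧ H.Adj x y) ↑u ↑w := by
  obtain ⟨p⟩ := h
  induction p with
  | nil => exact Relation.ReflTransGen.refl
  | cons hadj _ ih =>
      exact Relation.ReflTransGen.head ⟨Subtype.mem _, Subtype.mem _, hadj⟩ ih

lemma connected_of_hub {W : Type*} (H' : SimpleGraph W) (hub : W)
    (h : ∀ v, H'.Reachable v hub) : H'.Connected := by
  have : Nonempty W := ⟨hub⟩
  exact ⟨fun u v => (h u).trans (h v).symm⟩

lemma rtg_subtype {V : Type*} {s : Set V} (R : V → V → Prop) (R' : ↥s → ↥s → Prop)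
    (hR : ∀ x y (hx : x ∈ s) (hy : y ∈ s), R x y → R' ⟨x, hx⟩ ⟨y, hy⟩)
    (hmem : ∀ x y, R x y → x ∈ s ∧ y ∈ s) :
    ∀ {u w : V} (hu : u ∈ s) (hw : w ∈ s), Relation.ReflTransGen R u w →
      Relation.ReflTransGen R' ⟨u, hu⟩ ⟨w, hw⟩ := by
  intro u w hu hw h
  induction h using Relation.ReflTransGen.head_induction_on with
  | refl => exact Relation.ReflTransGen.refl
  | head hr _ ih =>
      exact Relation.ReflTransGen.head
        (hR _ _ (hmem _ _ hr).1 (hmem _ _ hr).2 hr) (ih (hmem _ _ hr).2)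


end CutAux

namespace CutAux

section Side
variable {V : Type} [Finite V] {G : SimpleGraph V} {X : Set V} {c o : Fin 3 → V}

/-- step relation within a vertex set -/
def RX (G : SimpleGraph V) (X : Set V) (x y : V) : Prop := x ∈ X ∧ y ∈ X ∧ G.Adj x y
/-- step relation avoiding a vertex -/
def RD (G : SimpleGraph V) (v : V) (x y : V) : Prop := x ≠ v ∧ y ≠ v ∧ G.Adj x y
/-- step relation within a set, avoiding a vertex -/
def RXD (G : SimpleGraph V) (X : Set V) (v : V) (x y : V) : Prop :=
  x ∈ X ∧ y ∈ X ∧ x ≠ v ∧ y ≠ v ∧ G.Adj x y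

/-- The hypotheses about one side `X` of a (nontrivial) 3-edge cut with cut edges
`s(c i, o i)`, `c i ∈ X`, `o i ∉ X`. -/
structure SideHyp (G : SimpleGraph V) (X : Set V) (c o : Fin 3 → V) : Prop where
  tc : TwoConnected G
  hcx : ∀ i, c i ∈ X
  hox : ∀ i, o i ∉ X
  adj : ∀ i, G.Adj (c i) (o i)
  ident : ∀ u w, G.Adj u w → u ∈ X → w ∉ X → ∃ i, u = c i ∧ w = o i
  hX2 : 2 ≤ X.ncard
  edist : ∀ i j, s(c i, o i) = s(c j, o j) → i = j

lemma rtg_del {G : SimpleGraph V} (tc : TwoConnected G) (v : V) {u w : V}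
    (hu : u ≠ v) (hw : w ≠ v) : Relation.ReflTransGen (RD G v) u w := by
  have h := (tc.2 v).preconnected ⟨u, hu⟩ ⟨w, hw⟩
  have h2 := rtg_of_reachable G {x | x ≠ v} h
  refine Relation.ReflTransGen.mono ?_ _ _ h2
  intro x y hxy
  exact ⟨hxy.1, hxy.2.1, hxy.2.2⟩

lemma escape {G : SimpleGraph V} {P : Set V} {v : V}
    (hcl : ∀ x z, x ∈ P → G.Adj x z → z ≠ v → z ∈ P) :
    ∀ {p q}, p ∈ P → Relation.ReflTransGen (RD G v) p q → q ∈ P := by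
  intro p q hp h
  induction h with
  | refl => exact hp
  | tail _ h2 ih => exact hcl _ _ ih h2.2.2 h2.2.1

lemma exists_attach_ne (H : SideHyp G X c o) : ∃ j, c j ≠ c 0 := by
  by_contra hall
  push_neg at hall
  have h2X : 2 ≤ X.ncard := H.hX2
  obtain ⟨t, htX, htc⟩ := Set.exists_ne_of_one_lt_ncard (by omega : 1 < X.ncard) (c 0)
  have hoc : o 0 ≠ c 0 := fun h => H.hox 0 (h ▸ H.hcx 0)
  have hcl : ∀ x z, x ∈ (X ∩ {w | w ≠ c 0} : Set V) → G.Adj x z → z ≠ c 0 →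
      z ∈ (X ∩ {w | w ≠ c 0} : Set V) := by
    intro x z hx ha hz
    by_cases hzX : z ∈ X
    · exact ⟨hzX, hz⟩
    · obtain ⟨i, hi1, _⟩ := H.ident x z ha hx.1 hzX
      exact absurd (hi1.trans (hall i)) hx.2
  have := escape hcl ⟨htX, htc⟩ (rtg_del H.tc (c 0) htc hoc)
  exact H.hox 0 this.1

lemma side_connected (H : SideHyp G X c o) :
    ∀ u w, u ∈ X → w ∈ X → Relation.ReflTransGen (RX G X) u w := by
  classical
  intro u w hu hw
  by_contra hnw
  set T : V → Set V := fun p => {x | x ∈ X ∧ Relation.ReflTransGen (RX G X) p x} with hT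
  have hTmem : ∀ p, p ∈ X → p ∈ T p := fun p hp => ⟨hp, Relation.ReflTransGen.refl⟩
  have hTcl : ∀ p x z, x ∈ T p → G.Adj x z → z ∈ X → z ∈ T p :=
    fun p x z hx ha hz => ⟨hz, hx.2.tail ⟨hx.1, hz, ha⟩⟩
  have hox0 : ∀ p, p ∈ X → p ≠ o 0 := fun p hp h => H.hox 0 (h ▸ hp)
  have key : ∀ p r, p ∈ X → r ∈ X → r ∉ T p →
      2 ≤ (Finset.univ.filter (fun i => c i ∈ T p)).card := by
    intro p r hp hr hrT
    by_contra hcard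
    push_neg at hcard
    have hcard1 : (Finset.univ.filter (fun i => c i ∈ T p)).card ≤ 1 := by omega
    by_cases hfe : ∀ i, c i ∉ T p
    · have hcl2 : ∀ x z, x ∈ T p → G.Adj x z → z ≠ o 0 → z ∈ T p := by
        intro x z hx ha hz0
        by_cases hzX : z ∈ X
        · exact hTcl p x z hx ha hzX
        · obtain ⟨i, hi1, _⟩ := H.ident x z ha hx.1 hzX
          exact absurd (hi1 ▸ hx) (hfe i)
      exact hrT (escape hcl2 (hTmem p hp)
        (rtg_del H.tc (o 0) (hox0 p hp) (hox0 r hr)))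
    · push_neg at hfe
      obtain ⟨i₀, hi₀⟩ := hfe
      have huniq : ∀ j, c j ∈ T p → j = i₀ := by
        intro j hj
        have := Finset.card_le_one.1 hcard1 j (by simp [hj]) i₀ (by simp [hi₀])
        exact this
      by_cases hex : ∃ t, t ∈ T p ∧ t ≠ c i₀
      · obtain ⟨t, htT, htne⟩ := hex
        have hoi : o i₀ ≠ c i₀ := fun h => H.hox i₀ (h ▸ H.hcx i₀)
        have hcl3 : ∀ x z, x ∈ (T p ∩ {w | w ≠ c i₀} : Set V) → G.Adj x z → z ≠ c i₀ →
            z ∈ (T p ∩ {w | w ≠ c i₀} : Set V) := by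
          intro x z hx ha hz
          by_cases hzX : z ∈ X
          · exact ⟨hTcl p x z hx.1 ha hzX, hz⟩
          · obtain ⟨j, hj1, _⟩ := H.ident x z ha hx.1.1 hzX
            have := huniq j (hj1 ▸ hx.1)
            exact absurd (hj1.trans (by rw [this])) hx.2
        have := escape hcl3 ⟨htT, htne⟩ (rtg_del H.tc (c i₀) htne hoi)
        exact H.hox i₀ this.1.1
      · push_neg at hex
        have hpc : p = c i₀ := hex p (hTmem p hp)
        have hrne : r ≠ p := fun h => hrT (h ▸ hTmem p hp)
        have hpo : p ≠ o i₀ := fun h => H.hox i₀ (h ▸ hp)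
        have hro : r ≠ o i₀ := fun h => H.hox i₀ (h ▸ hr)
        rcases Relation.ReflTransGen.cases_head (rtg_del H.tc (o i₀) hpo hro) with
          heq | ⟨z, hstep, _⟩
        · exact hrne heq.symm
        · by_cases hzX : z ∈ X
          · have hzT : z ∈ T p := hTcl p p z (hTmem p hp) hstep.2.2 hzX
            have hzc : z = c i₀ := hex z hzT
            exact absurd (hzc.trans hpc.symm) hstep.2.2.ne'
          · obtain ⟨j, hj1, hj2⟩ := H.ident p z hstep.2.2 hp hzX
            have hji : j = i₀ := huniq j (hj1 ▸ hTmem p hp)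
            exact hstep.2.1 (hj2.trans (by rw [hji]))
  have hsymmrel : ∀ x y, RX G X x y → RX G X y x := fun x y h => ⟨h.2.1, h.1, h.2.2.symm⟩
  have hunT : u ∉ T w := by
    intro hu'
    exact hnw (rtg_symm hsymmrel hu'.2)
  have hsymmrel2 := hsymmrel
  have hwnT : w ∉ T u := fun hw' => hnw hw'.2
  have h1 := key u w hu hw hwnT
  have h2 := key w u hw hu hunT
  have hdisj : Disjoint (Finset.univ.filter (fun i => c i ∈ T u))
      (Finset.univ.filter (fun i => c i ∈ T w)) := by
    rw [Finset.disjoint_left]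
    intro i hiu hiw
    simp only [Finset.mem_filter] at hiu hiw
    exact hnw ((hiu.2.2).trans (rtg_symm hsymmrel hiw.2.2))
  have := Finset.card_union_of_disjoint hdisj ▸ Finset.card_le_univ
    ((Finset.univ.filter (fun i => c i ∈ T u)) ∪ (Finset.univ.filter (fun i => c i ∈ T w)))
  simp only [Finset.card_univ, Fintype.card_fin] at this
  omega

lemma exit_prefix (H : SideHyp G X c o) (v : V) (hvo : o 0 ≠ v) :
    ∀ u, u ∈ X → u ≠ v → ∃ i, c i ≠ v ∧ Relation.ReflTransGen (RXD G X v) u (c i) := by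
  have Hgen : ∀ x, Relation.ReflTransGen (RD G v) x (o 0) → x ∈ X →
      ∃ i, c i ≠ v ∧ Relation.ReflTransGen (RXD G X v) x (c i) := by
    intro x hx
    induction hx using Relation.ReflTransGen.head_induction_on with
    | refl => exact fun hx0 => absurd hx0 (H.hox 0)
    | @head a z hstep htail ih =>
        intro hxX
        by_cases hzX : z ∈ X
        · obtain ⟨i, hci, hr⟩ := ih hzX
          exact ⟨i, hci, Relation.ReflTransGen.head
            ⟨hxX, hzX, hstep.1, hstep.2.1, hstep.2.2⟩ hr⟩
        · obtain ⟨i, hi1, _⟩ := H.ident _ _ hstep.2.2 hxX hzX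
          exact ⟨i, hi1 ▸ hstep.1, hi1 ▸ Relation.ReflTransGen.refl⟩
  intro u hu huv
  exact Hgen u (rtg_del H.tc v huv hvo) hu

end Side
end CutAux

namespace CutAux
section SideGraph
variable {V : Type} [Finite V] {G : SimpleGraph V} {X : Set V} {c o : Fin 3 → V}

/-- the set of attachment vertices -/
def attS (c : Fin 3 → V) : Set V := {x | ∃ i, c i = x}

/-- The contraction of the complement side to the single vertex `o 0`. -/
def sideGraph (G : SimpleGraph V) (X : Set V) (c o : Fin 3 → V) :
    SimpleGraph ↥(insert (o 0) X) where
  Adj p q := p ≠ q ∧ (((p : V) ∈ X ∧ (q : V) ∈ X ∧ G.Adj p q) ∨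
    ((p : V) = o 0 ∧ (q : V) ∈ attS c) ∨ ((q : V) = o 0 ∧ (p : V) ∈ attS c))
  symm := by
    constructor
    intro p q h
    refine ⟨h.1.symm, ?_⟩
    rcases h.2 with ⟨h1, h2, h3⟩ | h | h
    · exact Or.inl ⟨h2, h1, h3.symm⟩
    · exact Or.inr (Or.inr h)
    · exact Or.inr (Or.inl h)
  loopless := ⟨fun p h => h.1 rfl⟩

/-- the contraction vertex -/
def yvert (X : Set V) (o : Fin 3 → V) : ↥(insert (o 0) X) := ⟨o 0, Set.mem_insert _ _⟩

lemma val_cases (p : ↥(insert (o 0) X)) : (p : V) = o 0 ∨ (p : V) ∈ X := by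
  rcases p.2 with h | h
  · exact Or.inl h
  · exact Or.inr h

lemma mem_Xp {x : V} (hx : x ∈ X) : x ∈ insert (o 0) X := Set.mem_insert_of_mem _ hx

lemma sideAdj_within {x z : ↥(insert (o 0) X)} (hx : (x : V) ∈ X) (hz : (z : V) ∈ X)
    (ha : G.Adj x z) : (sideGraph G X c o).Adj x z :=
  ⟨fun h => ha.ne (congrArg _ h), Or.inl ⟨hx, hz, ha⟩⟩

lemma sideAdj_att (H : SideHyp G X c o) (i : Fin 3) :
    (sideGraph G X c o).Adj (yvert X o) ⟨c i, mem_Xp (H.hcx i)⟩ := by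
  refine ⟨fun h => ?_, Or.inr (Or.inl ⟨rfl, ⟨i, rfl⟩⟩)⟩
  have : o 0 = c i := congrArg Subtype.val h
  exact H.hox 0 (this ▸ H.hcx i)

lemma side_vertexcard (H : SideHyp G X c o) :
    Nat.card ↥(insert (o 0) X) = X.ncard + 1 := by
  rw [Nat.card_coe_set_eq, Set.ncard_insert_of_notMem (H.hox 0)]

lemma side_twoConnected (H : SideHyp G X c o) : TwoConnected (sideGraph G X c o) := by
  have h2X := H.hX2
  constructor
  · rw [side_vertexcard H]; omega
  · intro v
    by_cases hv : (v : V) = o 0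
    · -- deleting the contraction vertex; hub: c 0
      have hchub : (⟨c 0, mem_Xp (H.hcx 0)⟩ : ↥(insert (o 0) X)) ∈
          {u : ↥(insert (o 0) X) | u ≠ v} := by
        intro h
        have : c 0 = (v : V) := congrArg Subtype.val h
        exact H.hox 0 (by rw [← hv, ← this]; exact H.hcx 0)
      apply connected_of_hub _ (⟨_, hchub⟩ : ↥{u : ↥(insert (o 0) X) | u ≠ v})
      intro p
      have hpX : ((p : ↥(insert (o 0) X)) : V) ∈ X := by
        rcases val_cases (p : ↥(insert (o 0) X)) with h | h
        · exact absurd (Subtype.ext (h.trans hv.symm)) p.2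
        · exact h
      have hrtg := side_connected H _ _ hpX (H.hcx 0)
      have hlift := rtg_subtype (s := insert (o 0) X) (RX G X)
        (fun x y : ↥(insert (o 0) X) =>
          x ∈ {u : ↥(insert (o 0) X) | u ≠ v} ∧ y ∈ {u : ↥(insert (o 0) X) | u ≠ v} ∧
            (sideGraph G X c o).Adj x y)
        (fun x y hx hy hr => by
          refine ⟨?_, ?_, sideAdj_within hr.1 hr.2.1 hr.2.2⟩
          · intro hh
            exact H.hox 0 (hv ▸ (congrArg Subtype.val hh) ▸ hr.1)
          · intro hh
            exact H.hox 0 (hv ▸ (congrArg Subtype.val hh) ▸ hr.2.1))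
        (fun x y hr => ⟨mem_Xp hr.1, mem_Xp hr.2.1⟩)
        ((p : ↥(insert (o 0) X)).2) (mem_Xp (H.hcx 0)) hrtg
      exact reachable_induce_of_rtg _ _ p.2 hchub hlift
    · -- deleting a vertex of X; hub: the contraction vertex
      have hvX : (v : V) ∈ X := (val_cases v).resolve_left hv
      have hyne : yvert X o ∈ {u : ↥(insert (o 0) X) | u ≠ v} := by
        intro h
        have h2 : o 0 = (v : V) := congrArg Subtype.val h
        exact H.hox 0 (h2 ▸ hvX)
      apply connected_of_hub _ (⟨_, hyne⟩ : ↥{u : ↥(insert (o 0) X) | u ≠ v})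
      intro p
      by_cases hpy : ((p : ↥(insert (o 0) X)) : V) = o 0
      · have : (p : ↥(insert (o 0) X)) = yvert X o := Subtype.ext hpy
        have hpe : p = ⟨yvert X o, hyne⟩ := Subtype.ext this
        rw [hpe]
      · have hpX : ((p : ↥(insert (o 0) X)) : V) ∈ X :=
          (val_cases (p : ↥(insert (o 0) X))).resolve_left hpy
        have hpv : ((p : ↥(insert (o 0) X)) : V) ≠ (v : V) := by
          intro h
          exact p.2 (Subtype.ext h)
        have hov : o 0 ≠ (v : V) := fun h => H.hox 0 (h ▸ hvX)
        obtain ⟨i, hci, hrtg⟩ := exit_prefix H (v : V) hov _ hpX hpv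
        have hlift := rtg_subtype (s := insert (o 0) X) (RXD G X (v : V))
          (fun x y : ↥(insert (o 0) X) =>
            x ∈ {u : ↥(insert (o 0) X) | u ≠ v} ∧ y ∈ {u : ↥(insert (o 0) X) | u ≠ v} ∧
              (sideGraph G X c o).Adj x y)
          (fun x y hx hy hr => by
            refine ⟨?_, ?_, sideAdj_within hr.1 hr.2.1 hr.2.2.2.2⟩
            · exact fun hh => hr.2.2.1 (congrArg Subtype.val hh)
            · exact fun hh => hr.2.2.2.1 (congrArg Subtype.val hh))
          (fun x y hr => ⟨mem_Xp hr.1, mem_Xp hr.2.1⟩)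
          ((p : ↥(insert (o 0) X)).2) (mem_Xp (H.hcx i)) hrtg
        have hcine : (⟨c i, mem_Xp (H.hcx i)⟩ : ↥(insert (o 0) X)) ∈
            {u : ↥(insert (o 0) X) | u ≠ v} := by
          intro hh
          exact hci (congrArg Subtype.val hh)
        have hstep : Relation.ReflTransGen
            (fun x y : ↥(insert (o 0) X) =>
              x ∈ {u : ↥(insert (o 0) X) | u ≠ v} ∧ y ∈ {u : ↥(insert (o 0) X) | u ≠ v} ∧
                (sideGraph G X c o).Adj x y)
            (⟨c i, mem_Xp (H.hcx i)⟩ : ↥(insert (o 0) X)) (yvert X o) :=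
          Relation.ReflTransGen.single ⟨hcine, hyne, (sideAdj_att H i).symm⟩
        exact reachable_induce_of_rtg _ _ p.2 hyne (hlift.trans hstep)

lemma side_not_K6 (H : SideHyp G X c o) :
    ¬ Nonempty (sideGraph G X c o ≃g (⊤ : SimpleGraph (Fin 6))) := by
  rintro ⟨φ⟩
  have hcard : Nat.card ↥(insert (o 0) X) = 6 := by
    rw [Nat.card_congr φ.toEquiv]; simp
  have hX5 : X.ncard = 5 := by
    have := side_vertexcard H; omega
  have hatt : (attS c).ncard ≤ 3 := by
    have h1 : attS c = c '' Set.univ := by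
      ext x; simp [attS, eq_comm]
    rw [h1]
    calc (c '' Set.univ).ncard ≤ (Set.univ : Set (Fin 3)).ncard := Set.ncard_image_le
    _ = 3 := by rw [Set.ncard_univ]; simp
  have hsub : ¬ X ⊆ attS c := by
    intro hsub
    have := Set.ncard_le_ncard hsub (Set.toFinite _)
    omega
  obtain ⟨x, hxX, hxatt⟩ := Set.not_subset.1 hsub
  have hne : (⟨x, mem_Xp hxX⟩ : ↥(insert (o 0) X)) ≠ yvert X o := by
    intro h
    have h2 : x = o 0 := congrArg Subtype.val h
    exact H.hox 0 (h2 ▸ hxX)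
  have hadj : (sideGraph G X c o).Adj ⟨x, mem_Xp hxX⟩ (yvert X o) := by
    rw [← φ.map_adj_iff]
    simp only [top_adj]
    exact fun h => hne (φ.toEquiv.injective h)
  rcases hadj.2 with ⟨_, h2, _⟩ | ⟨h1, _⟩ | ⟨_, h2⟩
  · exact H.hox 0 h2
  · exact H.hox 0 (h1 ▸ hxX)
  · exact hxatt h2

end SideGraph
end CutAux

namespace CutAux
section SideSize
variable {V : Type} [Finite V] {G : SimpleGraph V} {X : Set V} {c o : Fin 3 → V}

lemma attS_sub (H : SideHyp G X c o) : attS c ⊆ X := by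
  rintro x ⟨i, rfl⟩
  exact H.hcx i

lemma attS_ncard : (attS c).ncard ≤ 3 := by
  have h1 : attS c = c '' Set.univ := by
    ext x; simp [attS, eq_comm]
  rw [h1]
  calc (c '' Set.univ).ncard ≤ (Set.univ : Set (Fin 3)).ncard := Set.ncard_image_le
  _ = 3 := by rw [Set.ncard_univ]; simp

lemma crossing_eq (H : SideHyp G X c o) :
    crossingEdges G X = (fun i => s(c i, o i)) '' Set.univ := by
  ext E
  constructor
  · rintro ⟨hE, x, y, rfl, hx, hy⟩
    obtain ⟨i, rfl, rfl⟩ := H.ident x y (G.mem_edgeSet.1 hE) hx hy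
    exact ⟨i, trivial, rfl⟩
  · rintro ⟨i, -, rfl⟩
    exact ⟨G.mem_edgeSet.2 (H.adj i), c i, o i, rfl, H.hcx i, H.hox i⟩

lemma crossing_ncard (H : SideHyp G X c o) : (crossingEdges G X).ncard = 3 := by
  rw [crossing_eq H]
  rw [Set.ncard_image_of_injOn (fun i _ j _ h => H.edist i j h)]
  rw [Set.ncard_univ]; simp

lemma side_card_lt (H : SideHyp G X c o) (hco2 : 2 ≤ Xᶜ.ncard) :
    Nat.card ↥(insert (o 0) X) + Nat.card (sideGraph G X c o).edgeSet
      < Nat.card V + Nat.card G.edgeSet := by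
  classical
  have hn : Nat.card V = X.ncard + Xᶜ.ncard := (Set.ncard_add_ncard_compl X).symm
  have hn1 : Nat.card ↥(insert (o 0) X) = X.ncard + 1 := side_vertexcard H
  -- edge bound
  set E1 := (sideGraph G X c o).edgeSet with hE1
  set B1 : Set (Sym2 ↥(insert (o 0) X)) := {E | E ∈ E1 ∧ yvert X o ∉ E} with hB1
  set B2 : Set (Sym2 ↥(insert (o 0) X)) := {E | E ∈ E1 ∧ yvert X o ∈ E} with hB2
  have hsplit : E1 ⊆ B1 ∪ B2 := by
    intro E hE
    by_cases h : yvert X o ∈ E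
    · exact Or.inr ⟨hE, h⟩
    · exact Or.inl ⟨hE, h⟩
  set A : Set (Sym2 V) := {E | E ∈ G.edgeSet ∧ ∀ x ∈ E, x ∈ X} with hA
  -- B1 bound
  have hB1im : (Sym2.map Subtype.val) '' B1 ⊆ A := by
    rintro E ⟨F, hF, rfl⟩
    induction F with
    | _ p q =>
      obtain ⟨hFE, hFy⟩ := hF
      rw [Sym2.mem_iff] at hFy
      push_neg at hFy
      have hpX : (p : V) ∈ X := by
        rcases val_cases p with h | h
        · exact absurd (Subtype.ext (show (yvert X o : V) = (p : V) from h.symm)) hFy.1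
        · exact h
      have hqX : (q : V) ∈ X := by
        rcases val_cases q with h | h
        · exact absurd (Subtype.ext (show (yvert X o : V) = (q : V) from h.symm)) hFy.2
        · exact h
      have hadj : G.Adj p q := by
        have := ((sideGraph G X c o).mem_edgeSet).1 hFE
        rcases this.2 with ⟨_, _, h3⟩ | ⟨h1, _⟩ | ⟨h1, _⟩
        · exact h3
        · exact absurd (Subtype.ext (show (yvert X o : V) = (p : V) from h1.symm)) hFy.1
        · exact absurd (Subtype.ext (show (yvert X o : V) = (q : V) from h1.symm)) hFy.2
      refine ⟨G.mem_edgeSet.2 hadj, ?_⟩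
      intro x hx
      rw [Sym2.map_pair_eq, Sym2.mem_iff] at hx
      rcases hx with rfl | rfl
      · exact hpX
      · exact hqX
  have hB1card : B1.ncard ≤ A.ncard := by
    rw [← Set.ncard_image_of_injective B1 (Sym2.map.injective Subtype.val_injective)]
    exact Set.ncard_le_ncard hB1im (Set.toFinite _)
  -- B2 bound
  have hB2card : B2.ncard ≤ 3 := by
    set g : Sym2 ↥(insert (o 0) X) → V :=
      fun E => if h : yvert X o ∈ E then ((Sym2.Mem.other h : ↥(insert (o 0) X)) : V)
        else o 0 with hg
    have hginj : Set.InjOn g B2 := by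
      intro E hE E' hE' hgE
      simp only [hg] at hgE
      rw [dif_pos hE.2, dif_pos hE'.2] at hgE
      have h2 : Sym2.Mem.other hE.2 = Sym2.Mem.other hE'.2 := Subtype.ext hgE
      rw [← Sym2.other_spec hE.2, ← Sym2.other_spec hE'.2, h2]
    have hgim : g '' B2 ⊆ attS c := by
      rintro x ⟨E, hE, rfl⟩
      simp only [hg]
      rw [dif_pos hE.2]
      have hsp := Sym2.other_spec hE.2
      have hadj : (sideGraph G X c o).Adj (yvert X o) (Sym2.Mem.other hE.2) := by
        rw [← SimpleGraph.mem_edgeSet, hsp]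
        exact hE.1
      rcases hadj.2 with ⟨h1, _, _⟩ | ⟨_, h2⟩ | ⟨h1, h2⟩
      · exact absurd h1 (H.hox 0)
      · exact h2
      · exact absurd ((show ((yvert X o : ↥(insert (o 0) X)) : V) = o 0 from rfl) ▸ h2)
          (fun hh => H.hox 0 (attS_sub H hh))
    have : B2.ncard = (g '' B2).ncard := (Set.ncard_image_of_injOn hginj).symm
    rw [this]
    calc (g '' B2).ncard ≤ (attS c).ncard := Set.ncard_le_ncard hgim (Set.toFinite _)
    _ ≤ 3 := attS_ncard
  -- A ∪ crossing ⊆ edgeSet, disjoint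
  have hdisj : Disjoint A (crossingEdges G X) := by
    rw [Set.disjoint_left]
    rintro E hEA ⟨_, x, y, rfl, hx, hy⟩
    exact hy (hEA.2 y (Sym2.mem_mk_right x y))
  have hsub2 : A ∪ crossingEdges G X ⊆ G.edgeSet := by
    rintro E (hE | hE)
    · exact hE.1
    · exact hE.1
  have hEbound : A.ncard + 3 ≤ (G.edgeSet).ncard := by
    have h1 := Set.ncard_le_ncard hsub2 (Set.toFinite _)
    rw [Set.ncard_union_eq hdisj (Set.toFinite _) (Set.toFinite _), crossing_ncard H] at h1
    exact h1
  have hE1card : E1.ncard ≤ B1.ncard + B2.ncard := by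
    calc E1.ncard ≤ (B1 ∪ B2).ncard := Set.ncard_le_ncard hsplit (Set.toFinite _)
    _ ≤ B1.ncard + B2.ncard := Set.ncard_union_le _ _
  have he1 : Nat.card E1 = E1.ncard := Nat.card_coe_set_eq _
  have he : Nat.card G.edgeSet = (G.edgeSet).ncard := Nat.card_coe_set_eq _
  rw [hn, hn1, he1, he]
  omega

end SideSize
end CutAux

namespace CutAux
section Material
variable {V : Type} [Finite V] {G : SimpleGraph V} {X : Set V} {c o : Fin 3 → V}

/-- the two cyclic permutations of `Fin 3` (as functions) -/
def σ1 : Fin 3 → Fin 3 := ![1, 2, 0]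
def σ2 : Fin 3 → Fin 3 := ![2, 0, 1]

lemma σ12_inv : ∀ i, σ1 (σ2 i) = i := by decide
lemma σ21_inv : ∀ i, σ2 (σ1 i) = i := by decide
lemma σ1_ne : ∀ i, σ1 i ≠ i := by decide
lemma σ2_ne : ∀ i, σ2 i ≠ i := by decide

/-- "Side material": a decomposition of all the arcs on one side `X` of the cut into
three directed paths (path `i` running from `c i` to `c (σ i)`) together with directed
cycles, each arc within `X` appearing exactly once. -/
structure Mat (G : SimpleGraph V) (X : Set V) (c : Fin 3 → V) (σ : Fin 3 → Fin 3) where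
  P : Fin 3 → List V
  Cs : Finset (List V)
  hPne : ∀ i, P i ≠ []
  hPhead : ∀ i, (P i).head (hPne i) = c i
  hPlast : ∀ i, (P i).getLast (hPne i) = c (σ i)
  hPnd : ∀ i, (P i).Nodup
  hPch : ∀ i, (P i).Chain' G.Adj
  hPsub : ∀ i, ∀ x ∈ P i, x ∈ X
  hCs : ∀ l ∈ Cs, IsDirCycle G l ∧ ∀ x ∈ l, x ∈ X
  cov : ∀ u v, G.Adj u v → u ∈ X → v ∈ X →
      (∃ i, (u, v) ∈ pArcs (P i)) ∨ (∃ l ∈ Cs, (u, v) ∈ cycleArcs l)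
  uniqPP : ∀ u v (i j : Fin 3), (u, v) ∈ pArcs (P i) → (u, v) ∈ pArcs (P j) → i = j
  uniqPC : ∀ u v (i : Fin 3) l, l ∈ Cs → (u, v) ∈ pArcs (P i) → (u, v) ∈ cycleArcs l → False
  uniqCC : ∀ u v l l', l ∈ Cs → l' ∈ Cs → (u, v) ∈ cycleArcs l → (u, v) ∈ cycleArcs l' →
      l = l'
  hcard : Cs.card + 2 ≤ X.ncard

lemma dirCycle_ne_nil {l : List V} (h : IsDirCycle G l) : l ≠ [] := by
  intro hl
  have := h.1
  rw [hl] at this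
  simp at this

open Classical in
/-- reversing all paths and cycles of a side material -/
noncomputable def Mat.rev {σ τ : Fin 3 → Fin 3} (hst : ∀ i, σ (τ i) = i)
    (hts : ∀ i, τ (σ i) = i) (M : Mat G X c σ) : Mat G X c τ where
  P := fun i => (M.P (τ i)).reverse
  Cs := M.Cs.image List.reverse
  hPne := fun i => by simp [M.hPne (τ i)]
  hPhead := fun i => by
    rw [List.head_reverse]
    rw [M.hPlast (τ i), hst]
  hPlast := fun i => by
    rw [List.getLast_reverse]
    exact M.hPhead (τ i)
  hPnd := fun i => List.nodup_reverse.2 (M.hPnd (τ i))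
  hPch := fun i => by
    rw [show List.Chain' G.Adj (M.P (τ i)).reverse ↔ _ from List.isChain_reverse]
    exact List.IsChain.imp (fun a b h => h.symm) (M.hPch (τ i))
  hPsub := fun i x hx => M.hPsub (τ i) x (List.mem_reverse.1 hx)
  hCs := by
    intro l hl
    obtain ⟨l', hl', rfl⟩ := Finset.mem_image.1 hl
    obtain ⟨hdc, hsub⟩ := M.hCs l' hl'
    have hne : l' ≠ [] := dirCycle_ne_nil hdc
    refine ⟨⟨by simpa using hdc.1, List.nodup_reverse.2 hdc.2.1, ?_⟩, fun x hx => hsub x (by simpa using hx)⟩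
    rintro ⟨u, v⟩ hp
    have := (mem_cycleArcs_reverse l' hne).1 hp
    exact (hdc.2.2 (v, u) this).symm
  cov := by
    intro u v hadj hu hv
    rcases M.cov v u hadj.symm hv hu with ⟨i, hi⟩ | ⟨l, hl, hmem⟩
    · refine Or.inl ⟨σ i, ?_⟩
      show (u, v) ∈ pArcs (M.P (τ (σ i))).reverse
      rw [hts i]
      exact (mem_pArcs_reverse _).2 hi
    · refine Or.inr ⟨l.reverse, Finset.mem_image_of_mem _ hl, ?_⟩
      exact (mem_cycleArcs_reverse l (dirCycle_ne_nil (M.hCs l hl).1)).2 hmem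
  uniqPP := by
    intro u v i j hi hj
    have hi' := (mem_pArcs_reverse _).1 hi
    have hj' := (mem_pArcs_reverse _).1 hj
    have := M.uniqPP v u (τ i) (τ j) hi' hj'
    have h2 := congrArg σ this
    rwa [hst, hst] at h2
  uniqPC := by
    intro u v i l hl hp hcyc
    obtain ⟨l', hl', rfl⟩ := Finset.mem_image.1 hl
    exact M.uniqPC v u (τ i) l' hl' ((mem_pArcs_reverse _).1 hp)
      ((mem_cycleArcs_reverse l' (dirCycle_ne_nil (M.hCs l' hl').1)).1 hcyc)
  uniqCC := by
    intro u v l l' hl hl' h1 h2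
    obtain ⟨a, ha, rfl⟩ := Finset.mem_image.1 hl
    obtain ⟨b, hb, rfl⟩ := Finset.mem_image.1 hl'
    have := M.uniqCC v u a b ha hb
      ((mem_cycleArcs_reverse a (dirCycle_ne_nil (M.hCs a ha).1)).1 h1)
      ((mem_cycleArcs_reverse b (dirCycle_ne_nil (M.hCs b hb).1)).1 h2)
    rw [this]
  hcard := le_trans (Nat.add_le_add_right Finset.card_image_le 2) M.hcard

end Material
end CutAux

namespace CutAux
section ExtractHelpers
variable {V : Type} [Finite V] {G : SimpleGraph V} {X : Set V} {c o : Fin 3 → V}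
variable {α β : Type*}

lemma adj_y_att (H : SideHyp G X c o) {z : ↥(insert (o 0) X)}
    (h : (sideGraph G X c o).Adj (yvert X o) z) : (z : V) ∈ attS c := by
  rcases h.2 with ⟨h1, _, _⟩ | ⟨_, h2⟩ | ⟨h1, _⟩
  · exact absurd h1 (H.hox 0)
  · exact h2
  · exact absurd (Subtype.ext (show (z : V) = ((yvert X o : ↥(insert (o 0) X)) : V) from h1)).symm h.1

lemma val_adj (H : SideHyp G X c o) {p q : ↥(insert (o 0) X)}
    (h : (sideGraph G X c o).Adj p q) (hp : (p : V) ≠ o 0) (hq : (q : V) ≠ o 0) :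
    G.Adj p q ∧ (p : V) ∈ X ∧ (q : V) ∈ X := by
  rcases h.2 with ⟨h1, h2, h3⟩ | ⟨h1, _⟩ | ⟨h1, _⟩
  · exact ⟨h3, h1, h2⟩
  · exact absurd h1 hp
  · exact absurd h1 hq

lemma head_ne_getLast {q : List α} (hnd : q.Nodup) (hne : q ≠ []) (hlen : 2 ≤ q.length) :
    q.head hne ≠ q.getLast hne := by
  obtain ⟨a, t, rfl⟩ := List.exists_cons_of_ne_nil hne
  have htne : t ≠ [] := by
    intro h; rw [h] at hlen; simp at hlen
  rw [List.head_cons, List.getLast_cons htne]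
  intro h
  rw [List.nodup_cons] at hnd
  exact hnd.1 (h ▸ List.getLast_mem htne)

lemma arc_head_mem (y : α) {q : List α} (hq : q ≠ []) :
    (y, q.head hq) ∈ cycleArcs (y :: q) := by
  rw [cycleArcs_cons y q hq]; exact List.mem_cons_self

lemma arc_last_mem (y : α) {q : List α} (hq : q ≠ []) :
    (q.getLast hq, y) ∈ cycleArcs (y :: q) := by
  rw [cycleArcs_cons y q hq]
  exact List.mem_cons_of_mem _ (List.mem_append_right _ (List.mem_singleton.2 rfl))

lemma arc_pArcs_mem (y : α) {q : List α} (hq : q ≠ []) {p : α × α} (hp : p ∈ pArcs q) :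
    p ∈ cycleArcs (y :: q) := by
  rw [cycleArcs_cons y q hq]
  exact List.mem_cons_of_mem _ (List.mem_append_left _ hp)

lemma arc_from_y {y w : α} {q : List α} (hq : q ≠ []) (hyq : y ∉ q)
    (h : (y, w) ∈ cycleArcs (y :: q)) : w = q.head hq := by
  rw [mem_cycleArcs_cons_iff hq] at h
  rcases h with ⟨_, h2⟩ | h | ⟨h1, _⟩
  · exact h2
  · exact absurd (mem_pArcs_left h) hyq
  · exact absurd (h1 ▸ List.getLast_mem hq) hyq

lemma arc_to_y {y w : α} {q : List α} (hq : q ≠ []) (hyq : y ∉ q)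
    (h : (w, y) ∈ cycleArcs (y :: q)) : w = q.getLast hq := by
  rw [mem_cycleArcs_cons_iff hq] at h
  rcases h with ⟨_, h2⟩ | h | ⟨h1, _⟩
  · exact absurd (h2 ▸ List.head_mem hq) hyq
  · exact absurd (mem_pArcs_right h) hyq
  · exact h1

lemma arc_avoid_y {y u v : α} {q : List α} (hq : q ≠ []) (hu : u ≠ y) (hv : v ≠ y)
    (h : (u, v) ∈ cycleArcs (y :: q)) : (u, v) ∈ pArcs q := by
  rw [mem_cycleArcs_cons_iff hq] at h
  rcases h with ⟨h1, _⟩ | h | ⟨_, h2⟩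
  · exact absurd h1 hu
  · exact h
  · exact absurd h2 hv

lemma ocdc_unique {W : Type*} {Gr : SimpleGraph W} {C : Finset (List W)}
    (hC : IsOCDC Gr C) {w z : W} {L₁ L₂ : List W} (h1 : L₁ ∈ C) (h2 : L₂ ∈ C)
    (ha1 : (w, z) ∈ cycleArcs L₁) (ha2 : (w, z) ∈ cycleArcs L₂) : L₁ = L₂ := by
  have hadj := (hC.1 L₁ h1).2.2 _ ha1
  obtain ⟨L, -, hun⟩ := hC.2 w z hadj
  rw [hun L₁ ⟨h1, ha1⟩, hun L₂ ⟨h2, ha2⟩]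

lemma passage {W : Type*} {Gr : SimpleGraph W} {C : Finset (List W)}
    (hC : IsOCDC Gr C) {L : List W} {y : W} (hL : L ∈ C) (hyL : y ∈ L) :
    ∃ a t, y ∉ a :: t ∧ (a :: t).Nodup ∧ t ≠ [] ∧
      (∀ p, p ∈ cycleArcs L ↔ p ∈ cycleArcs (y :: a :: t)) := by
  obtain ⟨n, q, hrot⟩ := exists_rotate_cons hyL
  have hdc := hC.1 L hL
  have hnd : (y :: q).Nodup := by
    rw [← hrot]
    exact List.nodup_rotate.2 hdc.2.1
  have hlen : 3 ≤ (y :: q).length := by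
    rw [← hrot, List.length_rotate]
    exact hdc.1
  obtain ⟨a, t, rfl⟩ : ∃ a t, q = a :: t := by
    cases q with
    | nil => simp at hlen
    | cons a t => exact ⟨a, t, rfl⟩
  have htne : t ≠ [] := by
    intro h; rw [h] at hlen; simp at hlen
  rw [List.nodup_cons] at hnd
  refine ⟨a, t, hnd.1, hnd.2, htne, fun p => ?_⟩
  rw [← hrot, mem_cycleArcs_rotate]

lemma unmap_pArc {f : α → β} {u v : β} {q : List α}
    (h : (u, v) ∈ pArcs (q.map f)) : ∃ x y, (x, y) ∈ pArcs q ∧ f x = u ∧ f y = v := by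
  rw [pArcs_map] at h
  obtain ⟨⟨x, y⟩, hm, he⟩ := List.mem_map.1 h
  obtain ⟨h1, h2⟩ := Prod.mk.injEq .. ▸ he
  exact ⟨x, y, hm, h1, h2⟩

lemma unmap_cycleArc {f : α → β} {u v : β} {q : List α}
    (h : (u, v) ∈ cycleArcs (q.map f)) : ∃ x y, (x, y) ∈ cycleArcs q ∧ f x = u ∧ f y = v := by
  rw [cycleArcs_map] at h
  obtain ⟨⟨x, y⟩, hm, he⟩ := List.mem_map.1 h
  obtain ⟨h1, h2⟩ := Prod.mk.injEq .. ▸ he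
  exact ⟨x, y, hm, h1, h2⟩

lemma map_pArc_mem {f : α → β} {x y : α} {q : List α} (h : (x, y) ∈ pArcs q) :
    (f x, f y) ∈ pArcs (q.map f) := by
  rw [pArcs_map]
  exact List.mem_map.2 ⟨(x, y), h, rfl⟩

lemma map_cycleArc_mem {f : α → β} {x y : α} {q : List α} (h : (x, y) ∈ cycleArcs q) :
    (f x, f y) ∈ cycleArcs (q.map f) := by
  rw [cycleArcs_map]
  exact List.mem_map.2 ⟨(x, y), h, rfl⟩

lemma getLast_map' (f : α → β) {l : List α} (h : l ≠ []) :
    (l.map f).getLast (by simpa using h) = f (l.getLast h) := by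
  rw [List.getLast_map]

lemma head_congr {l l' : List α} (h : l = l') (hl : l ≠ []) :
    l.head hl = l'.head (h ▸ hl) := by subst h; rfl

lemma getLast_congr {l l' : List α} (h : l = l') (hl : l ≠ []) :
    l.getLast hl = l'.getLast (h ▸ hl) := by subst h; rfl

lemma perm_classify : ∀ π : Fin 3 → Fin 3, Function.Injective π → (∀ i, π i ≠ i) →
    π = σ1 ∨ π = σ2 := by decide

lemma fin3_third : ∀ i j : Fin 3, i ≠ j → ∃ k, k ≠ i ∧ k ≠ j ∧ ∀ m : Fin 3,
    m = i ∨ m = j ∨ m = k := by decide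

end ExtractHelpers
end CutAux

namespace CutAux
section Extract
variable {V : Type} [Finite V] {G : SimpleGraph V} {X : Set V} {c o : Fin 3 → V}

lemma extract (H : SideHyp G X c o) {C : Finset (List ↥(insert (o 0) X))}
    (hC : IsOCDC (sideGraph G X c o) C)
    (hBnd : C.card ≤ X.ncard ∨ (C.card ≤ X.ncard + 1 ∧ Function.Injective c))
    (σ : Fin 3 → Fin 3) (hσ : σ = σ1 ∨ σ = σ2) :
    Nonempty (Mat G X c σ) := by
  classical
  set y : ↥(insert (o 0) X) := yvert X o with hy
  have main : ∀ i : Fin 3, ∃ L a t, L ∈ C ∧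
      (∀ p, p ∈ cycleArcs L ↔ p ∈ cycleArcs (y :: a :: t)) ∧
      (y ∉ a :: t) ∧ (a :: t).Nodup ∧ t ≠ [] ∧ ((a : V) = c i) := by
    intro i
    obtain ⟨L, ⟨hLC, hLarc⟩, -⟩ := hC.2 y ⟨c i, mem_Xp (H.hcx i)⟩ (sideAdj_att H i)
    have hyL : y ∈ L := mem_cycleArcs_left hLarc
    obtain ⟨a, t, hyq, hnd, htne, harcs⟩ := passage hC hLC hyL
    refine ⟨L, a, t, hLC, harcs, hyq, hnd, htne, ?_⟩
    have h1 := (harcs _).1 hLarc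
    have h2 := arc_from_y (List.cons_ne_nil a t) hyq h1
    rw [List.head_cons] at h2
    exact congrArg Subtype.val h2.symm
  choose L a t hLC harcs hyq hnd htne hhead using main
  set q : Fin 3 → List ↥(insert (o 0) X) := fun i => a i :: t i with hq
  have hqne : ∀ i, q i ≠ [] := fun i => List.cons_ne_nil _ _
  have hqlen : ∀ i, 2 ≤ (q i).length := by
    intro i
    show 2 ≤ (a i :: t i).length
    have := htne i
    cases hti : t i with
    | nil => exact absurd hti this
    | cons b u => simp
  have hqhead : ∀ i, ((q i).head (hqne i) : V) = c i := fun i => hhead i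
  have harc_in : ∀ i, (y, a i) ∈ cycleArcs (L i) := by
    intro i
    rw [harcs i]
    have := arc_head_mem y (hqne i)
    rwa [show (q i).head (hqne i) = a i from rfl] at this
  have hyL : ∀ i, y ∈ L i := fun i => mem_cycleArcs_left (harc_in i)
  have hlast_att : ∀ i, (((q i).getLast (hqne i)) : V) ∈ attS c := by
    intro i
    have hmem := arc_last_mem y (hqne i)
    rw [← harcs i] at hmem
    have hadj := (hC.1 (L i) (hLC i)).2.2 _ hmem
    exact adj_y_att H hadj.symm
  have Lval : ∀ i j, L i = L j → c i = c j := by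
    intro i j hij
    have h1 := harc_in i
    rw [hij, harcs j] at h1
    have h2 := arc_from_y (hqne j) (hyq j) h1
    rw [← hhead i, h2]
    exact hqhead j
  have Luniq : ∀ M, M ∈ C → y ∈ M → ∃ i, M = L i := by
    intro M hM hyM
    obtain ⟨am, tm, hyqm, hndm, htnem, harcsm⟩ := passage hC hM hyM
    have harc : (y, am) ∈ cycleArcs M := by
      rw [harcsm]
      have := arc_head_mem y (List.cons_ne_nil am tm)
      rwa [List.head_cons] at this
    have hadj := (hC.1 M hM).2.2 _ harc
    obtain ⟨i, hi⟩ := adj_y_att H hadj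
    refine ⟨i, ?_⟩
    have hai : a i = am := Subtype.ext (by rw [hhead i, hi])
    exact ocdc_unique hC hM (hLC i) harc (hai ▸ harc_in i)
  -- mapped paths
  set PM : Fin 3 → List V := fun i => (q i).map Subtype.val with hPM
  have hPMne : ∀ i, PM i ≠ [] := by
    intro i
    show (q i).map Subtype.val ≠ []
    simp [hq]
  have hPMhead : ∀ i, (PM i).head (hPMne i) = c i := by
    intro i
    exact hhead i
  have hPMlastval : ∀ i, (PM i).getLast (hPMne i) = (((q i).getLast (hqne i)) : V) :=
    fun i => getLast_map' Subtype.val (hqne i)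
  have hPMnd : ∀ i, (PM i).Nodup := fun i => (hnd i).map Subtype.val_injective
  have hmemq_ne : ∀ i, ∀ x ∈ q i, (x : V) ≠ o 0 := by
    intro i x hx hxo
    have hxy : x = y := Subtype.ext (show (x : V) = (y : V) from hxo)
    exact hyq i (hxy ▸ hx)
  have hq_adj : ∀ i, ∀ p ∈ pArcs (q i),
      G.Adj (p.1 : V) (p.2 : V) ∧ ((p.1 : V) ∈ X) ∧ ((p.2 : V) ∈ X) := by
    rintro i ⟨x, z⟩ hp
    have hmem : (x, z) ∈ cycleArcs (L i) := by
      rw [harcs i]; exact arc_pArcs_mem y (hqne i) hp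
    have hadj := (hC.1 (L i) (hLC i)).2.2 _ hmem
    exact val_adj H hadj (hmemq_ne i x (mem_pArcs_left hp)) (hmemq_ne i z (mem_pArcs_right hp))
  have hPMch : ∀ i, (PM i).Chain' G.Adj := by
    intro i
    apply chain'_of_pArcs
    rintro ⟨u, v⟩ hp
    obtain ⟨x, z, hxz, rfl, rfl⟩ := unmap_pArc hp
    exact (hq_adj i (x, z) hxz).1
  have hPMsub : ∀ i, ∀ x ∈ PM i, x ∈ X := by
    intro i x hx
    obtain ⟨z, hz, rfl⟩ := List.mem_map.1 hx
    rcases val_cases z with h | h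
    · exact absurd h (hmemq_ne i z hz)
    · exact h
  -- pure cycles
  set Cs : Finset (List V) := (C.filter (fun l => y ∉ l)).image (List.map Subtype.val)
    with hCsdef
  have hCsprop : ∀ l ∈ Cs, IsDirCycle G l ∧ ∀ x ∈ l, x ∈ X := by
    intro l hl
    obtain ⟨l', hl', rfl⟩ := Finset.mem_image.1 hl
    rw [Finset.mem_filter] at hl'
    have hdc := hC.1 l' hl'.1
    have hvne : ∀ x ∈ l', (x : V) ≠ o 0 := by
      intro x hx hxo
      have hxy : x = y := Subtype.ext (show (x : V) = (y : V) from hxo)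
      exact hl'.2 (hxy ▸ hx)
    have hsub : ∀ x ∈ List.map Subtype.val l', x ∈ X := by
      intro x hx
      obtain ⟨z, hz, rfl⟩ := List.mem_map.1 hx
      rcases val_cases z with h | h
      · exact absurd h (hvne z hz)
      · exact h
    refine ⟨⟨by simpa using hdc.1, (hdc.2.1).map Subtype.val_injective, ?_⟩, hsub⟩
    rintro ⟨u, v⟩ hp
    obtain ⟨x, z, hxz, rfl, rfl⟩ := unmap_cycleArc hp
    have hadj := hdc.2.2 _ hxz
    exact (val_adj H hadj (hvne x (mem_cycleArcs_left hxz))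
      (hvne z (mem_cycleArcs_right hxz))).1
  -- coverage skeleton
  have cov0 : ∀ u v (hu : u ∈ X) (hv : v ∈ X), G.Adj u v →
      (∃ M, M ∈ C ∧ y ∈ M ∧
        ((⟨u, mem_Xp hu⟩ : ↥(insert (o 0) X)), (⟨v, mem_Xp hv⟩ : ↥(insert (o 0) X)))
          ∈ cycleArcs M) ∨
      (∃ l ∈ Cs, (u, v) ∈ cycleArcs l) := by
    intro u v hu hv hadj
    have hadjX : (sideGraph G X c o).Adj ⟨u, mem_Xp hu⟩ ⟨v, mem_Xp hv⟩ :=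
      sideAdj_within hu hv hadj
    obtain ⟨M, ⟨hMC, hMarc⟩, -⟩ := hC.2 _ _ hadjX
    by_cases hyM : y ∈ M
    · exact Or.inl ⟨M, hMC, hyM, hMarc⟩
    · refine Or.inr ⟨M.map Subtype.val,
        Finset.mem_image_of_mem _ (Finset.mem_filter.2 ⟨hMC, hyM⟩), ?_⟩
      exact map_cycleArc_mem hMarc
  have hXarc_ne_y : ∀ {u : V} (hu : u ∈ X), (⟨u, mem_Xp hu⟩ : ↥(insert (o 0) X)) ≠ y := by
    intro u hu h
    have h2 : u = o 0 := congrArg Subtype.val h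
    exact H.hox 0 (h2 ▸ hu)
  have arc_to_PM : ∀ i, ∀ u v (hu : u ∈ X) (hv : v ∈ X),
      ((⟨u, mem_Xp hu⟩ : ↥(insert (o 0) X)), (⟨v, mem_Xp hv⟩ : ↥(insert (o 0) X)))
        ∈ cycleArcs (L i) → (u, v) ∈ pArcs (PM i) := by
    intro i u v hu hv hmem
    rw [harcs i] at hmem
    have := arc_avoid_y (hqne i) (hXarc_ne_y hu) (hXarc_ne_y hv) hmem
    exact map_pArc_mem this
  -- uniqueness helpers
  have uniqPMPM : ∀ (u v : V) i j, (u, v) ∈ pArcs (PM i) → (u, v) ∈ pArcs (PM j) →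
      L i = L j := by
    intro u v i j h1 h2
    obtain ⟨x1, z1, hx1, he1, he2⟩ := unmap_pArc h1
    obtain ⟨x2, z2, hx2, he3, he4⟩ := unmap_pArc h2
    have hx12 : x2 = x1 := Subtype.ext (he3.trans he1.symm)
    have hz12 : z2 = z1 := Subtype.ext (he4.trans he2.symm)
    refine ocdc_unique hC (hLC i) (hLC j) ((harcs i _).2 (arc_pArcs_mem y (hqne i) hx1)) ?_
    exact (harcs j _).2 (arc_pArcs_mem y (hqne j) (hx12 ▸ hz12 ▸ hx2))
  have uniqPMCs : ∀ (u v : V) i l, l ∈ Cs → (u, v) ∈ pArcs (PM i) →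
      (u, v) ∈ cycleArcs l → False := by
    intro u v i l hl h1 h2
    obtain ⟨l', hl', rfl⟩ := Finset.mem_image.1 hl
    rw [Finset.mem_filter] at hl'
    obtain ⟨x1, z1, hx1, he1, he2⟩ := unmap_pArc h1
    obtain ⟨x2, z2, hx2, he3, he4⟩ := unmap_cycleArc h2
    have hx12 : x2 = x1 := Subtype.ext (he3.trans he1.symm)
    have hz12 : z2 = z1 := Subtype.ext (he4.trans he2.symm)
    have : l' = L i := ocdc_unique hC hl'.1 (hLC i)
      (hx12 ▸ hz12 ▸ hx2) ((harcs i _).2 (arc_pArcs_mem y (hqne i) hx1))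
    exact hl'.2 (this ▸ hyL i)
  have uniqCsCs : ∀ (u v : V) l l', l ∈ Cs → l' ∈ Cs → (u, v) ∈ cycleArcs l →
      (u, v) ∈ cycleArcs l' → l = l' := by
    intro u v l l' hl hl' h1 h2
    obtain ⟨m1, hm1, rfl⟩ := Finset.mem_image.1 hl
    obtain ⟨m2, hm2, rfl⟩ := Finset.mem_image.1 hl'
    rw [Finset.mem_filter] at hm1 hm2
    obtain ⟨x1, z1, hx1, he1, he2⟩ := unmap_cycleArc h1
    obtain ⟨x2, z2, hx2, he3, he4⟩ := unmap_cycleArc h2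
    have hx12 : x2 = x1 := Subtype.ext (he3.trans he1.symm)
    have hz12 : z2 = z1 := Subtype.ext (he4.trans he2.symm)
    have : m1 = m2 := ocdc_unique hC hm1.1 hm2.1 hx1 (hx12 ▸ hz12 ▸ hx2)
    rw [this]
  have hCsbound : Cs.card + (C.filter (fun l => y ∈ l)).card ≤ C.card := by
    have h1 : Cs.card ≤ (C.filter (fun l => y ∉ l)).card := Finset.card_image_le
    have h2 := Finset.card_filter_add_card_filter_not
      (s := C) (p := fun l => y ∈ l)
    omega
  by_cases hinj : Function.Injective c
  · -- all three attachments distinct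
    have hLinj : ∀ i j, L i = L j → i = j := fun i j h => hinj (Lval i j h)
    have hLne : ∀ i j, i ≠ j → L i ≠ L j := fun i j hij h => hij (hLinj i j h)
    have hcard3 : 3 ≤ (C.filter (fun l => y ∈ l)).card := by
      have hsub : ({L 0, L 1, L 2} : Finset (List ↥(insert (o 0) X))) ⊆
          C.filter (fun l => y ∈ l) := by
        intro M hM
        simp only [Finset.mem_insert, Finset.mem_singleton] at hM
        rcases hM with rfl | rfl | rfl <;>
          exact Finset.mem_filter.2 ⟨hLC _, hyL _⟩
      refine le_trans ?_ (Finset.card_le_card hsub)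
      rw [Finset.card_insert_of_notMem (by
          simp only [Finset.mem_insert, Finset.mem_singleton]
          push_neg
          exact ⟨hLne 0 1 (by decide), hLne 0 2 (by decide)⟩),
        Finset.card_insert_of_notMem (by
          simp only [Finset.mem_singleton]
          exact hLne 1 2 (by decide)),
        Finset.card_singleton]
    have hCbound : C.card ≤ X.ncard + 1 := by
      rcases hBnd with h | h
      · omega
      · exact h.1
    choose π hπ using fun i => hlast_att i
    have hπinj : Function.Injective π := by
      intro i j hij
      apply hLinj
      have hg : (q i).getLast (hqne i) = (q j).getLast (hqne j) :=
        Subtype.ext (by rw [← hπ i, ← hπ j, hij])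
      refine ocdc_unique hC (hLC i) (hLC j) ((harcs i _).2 (arc_last_mem y (hqne i))) ?_
      exact (harcs j _).2 (hg ▸ arc_last_mem y (hqne j))
    have hπfp : ∀ i, π i ≠ i := by
      intro i h
      have hvals : ((q i).head (hqne i) : V) = (((q i).getLast (hqne i)) : V) := by
        rw [hqhead i, ← hπ i, h]
      exact head_ne_getLast (hnd i) (hqne i) (hqlen i) (Subtype.ext hvals)
    have M : Mat G X c π := by
      refine ⟨PM, Cs, hPMne, hPMhead, ?_, hPMnd, hPMch, hPMsub, hCsprop, ?_, ?_, ?_, ?_, ?_⟩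
      · intro i
        rw [hPMlastval i]
        exact (hπ i).symm
      · intro u v hadj hu hv
        rcases cov0 u v hu hv hadj with ⟨M, hMC, hyM, hmem⟩ | h
        · obtain ⟨i, rfl⟩ := Luniq M hMC hyM
          exact Or.inl ⟨i, arc_to_PM i u v hu hv hmem⟩
        · exact Or.inr h
      · exact fun u v i j h1 h2 => hLinj i j (uniqPMPM u v i j h1 h2)
      · exact fun u v i l hl h1 h2 => uniqPMCs u v i l hl h1 h2
      · exact uniqCsCs
      · omega
    rcases perm_classify π hπinj hπfp with rfl | rfl <;> rcases hσ with rfl | rfl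
    · exact ⟨M⟩
    · exact ⟨M.rev σ12_inv σ21_inv⟩
    · exact ⟨M.rev σ21_inv σ12_inv⟩
    · exact ⟨M⟩
  · -- two attachments coincide
    have hCbound : C.card ≤ X.ncard := hBnd.resolve_right (fun h => hinj h.2)
    obtain ⟨i, j, hcij, hij⟩ := Function.not_injective_iff.1 hinj
    obtain ⟨k, hki, hkj, hall⟩ := fin3_third i j hij
    have hck : c k ≠ c i := by
      intro h
      obtain ⟨m, hm⟩ := exists_attach_ne H
      have h0 : c 0 = c i := by
        rcases hall 0 with h' | h' | h'
        · rw [h']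
        · rw [h', ← hcij]
        · rw [h', h]
      have hmi : c m = c i := by
        rcases hall m with h' | h' | h'
        · rw [h']
        · rw [h', ← hcij]
        · rw [h', h]
      exact hm (hmi.trans h0.symm)
    have hval2 : ∀ m, c m = c i ∨ c m = c k := by
      intro m
      rcases hall m with h' | h' | h'
      · exact Or.inl (by rw [h'])
      · exact Or.inl (by rw [h', ← hcij])
      · exact Or.inr (by rw [h'])
    have honlyk : ∀ m, c m = c k → m = k := by
      intro m hm
      rcases hall m with rfl | rfl | rfl
      · exact absurd hm.symm hck
      · exact absurd (hcij.trans hm).symm hck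
      · rfl
    have hlastval : ∀ m, (((q m).getLast (hqne m)) : V) = c i ∨
        (((q m).getLast (hqne m)) : V) = c k := by
      intro m
      obtain ⟨m', hm'⟩ := hlast_att m
      rcases hval2 m' with h' | h'
      · exact Or.inl (hm' ▸ h')
      · exact Or.inr (hm' ▸ h')
    have hlast_ne : ∀ m, (((q m).getLast (hqne m)) : V) ≠ c m := by
      intro m hm
      have hvals : ((q m).head (hqne m) : V) = (((q m).getLast (hqne m)) : V) := by
        rw [hqhead m, hm]
      exact head_ne_getLast (hnd m) (hqne m) (hqlen m) (Subtype.ext hvals)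
    have hlast_i : (((q i).getLast (hqne i)) : V) = c k :=
      (hlastval i).resolve_left (hlast_ne i)
    have hlast_k : (((q k).getLast (hqne k)) : V) = c i :=
      (hlastval k).resolve_right (hlast_ne k)
    have hLik : L i ≠ L k := fun h => hck (Lval i k h).symm
    have Luniq2 : ∀ M, M ∈ C → y ∈ M → M = L i ∨ M = L k := by
      intro M hM hyM
      obtain ⟨m, rfl⟩ := Luniq M hM hyM
      rcases hall m with h' | h' | h'
      · exact Or.inl (by rw [h'])
      · refine Or.inl ?_
        have haij : a m = a i := Subtype.ext (by rw [hhead m, hhead i, h', ← hcij])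
        exact ocdc_unique hC (hLC m) (hLC i) (harc_in m) (haij ▸ harc_in i)
      · exact Or.inr (by rw [h'])
    have hfp : ∀ m, σ m ≠ m := by rcases hσ with rfl | rfl; exacts [σ1_ne, σ2_ne]
    have hσinj : Function.Injective σ := by
      rcases hσ with rfl | rfl <;> decide
    set P : Fin 3 → List V :=
      fun m => if c m = c (σ m) then [c m] else (if c m = c i then PM i else PM k) with hP
    have hbr : ∀ m, c m ≠ c (σ m) →
        (c m = c i ∧ c (σ m) = c k ∧ P m = PM i ∧ σ m = k) ∨
        (c m = c k ∧ c (σ m) = c i ∧ P m = PM k ∧ m = k) := by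
      intro m hm
      rcases hval2 m with h1 | h1
      · left
        have h2 : c (σ m) = c k := (hval2 (σ m)).resolve_left (by
          intro hh
          exact hm (h1.trans hh.symm))
        refine ⟨h1, h2, ?_, honlyk _ h2⟩
        show (if c m = c (σ m) then [c m] else (if c m = c i then PM i else PM k)) = PM i
        rw [if_neg hm, if_pos h1]
      · right
        have h2 : c (σ m) = c i := (hval2 (σ m)).resolve_right (by
          intro hh
          exact hm (h1.trans hh.symm))
        have h3 : c m ≠ c i := by rw [h1]; exact hck
        refine ⟨h1, h2, ?_, honlyk _ h1⟩
        show (if c m = c (σ m) then [c m] else (if c m = c i then PM i else PM k)) = PM k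
        rw [if_neg hm, if_neg h3]
    have hPcases : ∀ m, (c m = c (σ m) ∧ P m = [c m]) ∨
        (c m ≠ c (σ m) ∧ ((c (σ m) = c k ∧ P m = PM i ∧ σ m = k) ∨
          (c m = c k ∧ P m = PM k ∧ m = k))) := by
      intro m
      by_cases hm : c m = c (σ m)
      · left
        refine ⟨hm, ?_⟩
        show (if c m = c (σ m) then [c m] else _) = [c m]
        rw [if_pos hm]
      · right
        refine ⟨hm, ?_⟩
        rcases hbr m hm with ⟨h1, h2, h3, h4⟩ | ⟨h1, h2, h3, h4⟩
        · exact Or.inl ⟨h2, h3, h4⟩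
        · exact Or.inr ⟨h1, h3, h4⟩
    -- the index whose path is PM i
    obtain ⟨mA, hmAne, hmA⟩ : ∃ m, c m ≠ c (σ m) ∧ P m = PM i := by
      obtain ⟨m, hmk⟩ : ∃ m, σ m = k := by
        rcases hσ with rfl | rfl
        · exact ⟨σ2 k, σ12_inv k⟩
        · exact ⟨σ1 k, σ21_inv k⟩
      have hm_ne_k : m ≠ k := by
        intro h
        exact hfp k (by rw [← h] at hmk ⊢; exact hmk)
      have hcm : c m = c i := (hval2 m).resolve_right (fun h => hm_ne_k (honlyk m h))
      have hne : c m ≠ c (σ m) := by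
        rw [hmk, hcm]
        exact fun h => hck h.symm
      refine ⟨m, hne, ?_⟩
      rcases hbr m hne with ⟨_, _, h3, _⟩ | ⟨h1, _, _, h4⟩
      · exact h3
      · exact absurd h4 hm_ne_k
    obtain ⟨hmBne, hmB⟩ : c k ≠ c (σ k) ∧ P k = PM k := by
      have h1 : c (σ k) = c i := (hval2 (σ k)).resolve_right (fun h => hfp k (honlyk _ h))
      have hne : c k ≠ c (σ k) := by
        rw [h1]
        exact hck
      refine ⟨hne, ?_⟩
      rcases hbr k hne with ⟨h1', _, _, _⟩ | ⟨_, _, h3, _⟩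
      · exact absurd h1' hck
      · exact h3
    have hfilters := Finset.card_filter_add_card_filter_not
      (s := C) (p := fun l => y ∈ l)
    have hLikcard : 2 ≤ (C.filter (fun l => y ∈ l)).card := by
      have hsub : ({L i, L k} : Finset (List ↥(insert (o 0) X))) ⊆
          C.filter (fun l => y ∈ l) := by
        intro M hM
        simp only [Finset.mem_insert, Finset.mem_singleton] at hM
        rcases hM with rfl | rfl <;> exact Finset.mem_filter.2 ⟨hLC _, hyL _⟩
      refine le_trans ?_ (Finset.card_le_card hsub)
      rw [Finset.card_insert_of_notMem (by simpa using hLik), Finset.card_singleton]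
    have hP_ne : ∀ m, P m ≠ [] := by
      intro m
      by_cases hm : c m = c (σ m)
      · show (if c m = c (σ m) then [c m] else _) ≠ []
        rw [if_pos hm]
        simp
      · rcases hbr m hm with ⟨_, _, h3, _⟩ | ⟨_, _, h3, _⟩ <;> rw [h3] <;> exact hPMne _
    have hPtriv : ∀ m, c m = c (σ m) → P m = [c m] := by
      intro m hm
      show (if c m = c (σ m) then [c m] else _) = [c m]
      rw [if_pos hm]
    have MT : Mat G X c σ := by
      refine ⟨P, Cs, hP_ne, ?_, ?_, ?_, ?_, ?_, hCsprop, ?_, ?_, ?_, uniqCsCs, ?_⟩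
      · -- head
        intro m
        by_cases hm : c m = c (σ m)
        · rw [head_congr (hPtriv m hm), List.head_cons]
        · rcases hbr m hm with ⟨h1, _, h3, _⟩ | ⟨h1, _, h3, _⟩
          · rw [head_congr h3, hPMhead i, h1]
          · rw [head_congr h3, hPMhead k, h1]
      · -- last
        intro m
        by_cases hm : c m = c (σ m)
        · rw [getLast_congr (hPtriv m hm), List.getLast_singleton, hm]
        · rcases hbr m hm with ⟨_, h2, h3, _⟩ | ⟨_, h2, h3, _⟩
          · rw [getLast_congr h3, hPMlastval i, hlast_i, h2]
          · rw [getLast_congr h3, hPMlastval k, hlast_k, h2]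
      · -- nodup
        intro m
        by_cases hm : c m = c (σ m)
        · rw [hPtriv m hm]; simp
        · rcases hbr m hm with ⟨_, _, h3, _⟩ | ⟨_, _, h3, _⟩ <;> rw [h3] <;> exact hPMnd _
      · -- chain'
        intro m
        by_cases hm : c m = c (σ m)
        · rw [hPtriv m hm]; exact List.isChain_singleton _
        · rcases hbr m hm with ⟨_, _, h3, _⟩ | ⟨_, _, h3, _⟩ <;> rw [h3] <;> exact hPMch _
      · -- subset
        intro m x hx
        by_cases hm : c m = c (σ m)
        · rw [hPtriv m hm] at hx
          simp only [List.mem_singleton] at hx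
          exact hx ▸ H.hcx m
        · rcases hbr m hm with ⟨_, _, h3, _⟩ | ⟨_, _, h3, _⟩ <;> rw [h3] at hx <;>
            exact hPMsub _ x hx
      · -- cov
        intro u v hadj hu hv
        rcases cov0 u v hu hv hadj with ⟨M, hMC, hyM, hmem⟩ | h
        · rcases Luniq2 M hMC hyM with rfl | rfl
          · exact Or.inl ⟨mA, by rw [hmA]; exact arc_to_PM i u v hu hv hmem⟩
          · exact Or.inl ⟨k, by rw [hmB]; exact arc_to_PM k u v hu hv hmem⟩
        · exact Or.inr h
      · -- uniqPP
        intro u v m m' h1 h2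
        by_cases hm : c m = c (σ m)
        · rw [hPtriv m hm] at h1
          exact absurd h1 (by simp [pArcs])
        by_cases hm' : c m' = c (σ m')
        · rw [hPtriv m' hm'] at h2
          exact absurd h2 (by simp [pArcs])
        rcases hbr m hm with ⟨hA1, _, h3, h4⟩ | ⟨hB1, _, h3, h4⟩ <;>
          rcases hbr m' hm' with ⟨hA1', _, h3', h4'⟩ | ⟨hB1', _, h3', h4'⟩
        · exact hσinj (h4.trans h4'.symm)
        · rw [h3] at h1; rw [h3'] at h2
          exact absurd (uniqPMPM u v i k h1 h2) hLik
        · rw [h3] at h1; rw [h3'] at h2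
          exact absurd (uniqPMPM u v k i h1 h2).symm hLik
        · exact h4.trans h4'.symm
      · -- uniqPC
        intro u v m l hl h1 h2
        by_cases hm : c m = c (σ m)
        · rw [hPtriv m hm] at h1
          exact absurd h1 (by simp [pArcs])
        · rcases hbr m hm with ⟨_, _, h3, _⟩ | ⟨_, _, h3, _⟩ <;> rw [h3] at h1
          · exact uniqPMCs u v i l hl h1 h2
          · exact uniqPMCs u v k l hl h1 h2
      · -- card
        omega
    exact ⟨MT⟩

end Extract
end CutAux

namespace CutAux
section Glue
variable {V : Type} [Finite V] {G : SimpleGraph V} {S : Set V} {aa bb : Fin 3 → V}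

lemma head_eq_getLast_of_length_one {α : Type*} {l : List α} (h : l ≠ [])
    (hl : l.length = 1) : l.head h = l.getLast h := by
  cases l with
  | nil => simp at h
  | cons a t =>
      cases t with
      | nil => rfl
      | cons b u => simp at hl

lemma glue (hS : SideHyp G S aa bb) (hY : SideHyp G Sᶜ bb aa)
    (MS : Mat G S aa σ1) (MY : Mat G Sᶜ bb σ2) : HasSOCDC G := by
  classical
  set glued : Fin 3 → List V := fun m => MS.P m ++ MY.P (σ1 m) with hglued
  have hRlast : ∀ m, (MY.P (σ1 m)).getLast (MY.hPne (σ1 m)) = bb m := by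
    intro m
    rw [MY.hPlast (σ1 m), σ21_inv]
  have idx_unique : ∀ m m', aa m = aa m' → bb m = bb m' → m = m' := by
    intro m m' h1 h2
    exact hS.edist m m' (by rw [h1, h2])
  have hclass : ∀ (m : Fin 3) (u v : V), ((u, v) ∈ cycleArcs (glued m)) ↔
      ((u, v) ∈ pArcs (MS.P m) ∨ (u = aa (σ1 m) ∧ v = bb (σ1 m)) ∨
       (u, v) ∈ pArcs (MY.P (σ1 m)) ∨ (u = bb m ∧ v = aa m)) := by
    intro m u v
    show ((u, v) ∈ cycleArcs (MS.P m ++ MY.P (σ1 m))) ↔ _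
    rw [mem_cycleArcs_append_iff (MS.hPne m) (MY.hPne (σ1 m))]
    rw [MS.hPlast m, MY.hPhead (σ1 m), hRlast m, MS.hPhead m]
  have hdir : ∀ m, IsDirCycle G (glued m) := by
    intro m
    refine ⟨?_, ?_, ?_⟩
    · show 3 ≤ (MS.P m ++ MY.P (σ1 m)).length
      rw [List.length_append]
      by_contra hlen
      push_neg at hlen
      have h1 : 1 ≤ (MS.P m).length := List.length_pos_iff.2 (MS.hPne m)
      have h2 : 1 ≤ (MY.P (σ1 m)).length := List.length_pos_iff.2 (MY.hPne (σ1 m))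
      have hP1 : (MS.P m).length = 1 := by omega
      have hR1 : (MY.P (σ1 m)).length = 1 := by omega
      have e1 : aa m = aa (σ1 m) := by
        rw [← MS.hPhead m, ← MS.hPlast m]
        exact head_eq_getLast_of_length_one (MS.hPne m) hP1
      have e2 : bb (σ1 m) = bb m := by
        rw [← MY.hPhead (σ1 m), ← hRlast m]
        exact head_eq_getLast_of_length_one (MY.hPne (σ1 m)) hR1
      exact σ1_ne m (idx_unique m (σ1 m) e1 e2.symm).symm
    · refine (MS.hPnd m).append (MY.hPnd (σ1 m)) ?_
      intro x hx hx'
      exact (MY.hPsub (σ1 m) x hx') (MS.hPsub m x hx)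
    · rintro ⟨u, v⟩ hp
      rw [hclass m u v] at hp
      rcases hp with h | ⟨rfl, rfl⟩ | h | ⟨rfl, rfl⟩
      · exact pArcs_of_chain' (MS.hPch m) _ h
      · exact hS.adj (σ1 m)
      · exact pArcs_of_chain' (MY.hPch (σ1 m)) _ h
      · exact (hS.adj m).symm
  set CC : Finset (List V) := (MS.Cs ∪ MY.Cs) ∪ Finset.image glued Finset.univ with hCC
  have hmemS : ∀ l ∈ MS.Cs, l ∈ CC := fun l hl =>
    Finset.mem_union.2 (Or.inl (Finset.mem_union.2 (Or.inl hl)))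
  have hmemY : ∀ l ∈ MY.Cs, l ∈ CC := fun l hl =>
    Finset.mem_union.2 (Or.inl (Finset.mem_union.2 (Or.inr hl)))
  have hmemG : ∀ m, glued m ∈ CC := fun m =>
    Finset.mem_union.2 (Or.inr (Finset.mem_image_of_mem _ (Finset.mem_univ m)))
  have hpS_in_glued : ∀ m {u v : V}, (u, v) ∈ pArcs (MS.P m) → (u, v) ∈ cycleArcs (glued m) :=
    fun m {u v} h => (hclass m u v).2 (Or.inl h)
  have hpY_in_glued : ∀ m {u v : V}, (u, v) ∈ pArcs (MY.P (σ1 m)) →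
      (u, v) ∈ cycleArcs (glued m) := fun m {u v} h => (hclass m u v).2 (Or.inr (Or.inr (Or.inl h)))
  refine ⟨CC, ⟨?_, ?_⟩, ?_⟩
  · -- all directed cycles
    intro l hl
    rcases Finset.mem_union.1 hl with h | h
    · rcases Finset.mem_union.1 h with h' | h'
      · exact (MS.hCs l h').1
      · exact (MY.hCs l h').1
    · obtain ⟨m, -, rfl⟩ := Finset.mem_image.1 h
      exact hdir m
  · -- exactly-once
    intro u v hadj
    by_cases hu : u ∈ S <;> by_cases hv : v ∈ S
    · -- both in S
      rcases MS.cov u v hadj hu hv with ⟨i₀, hi₀⟩ | ⟨l₀, hl₀, harc₀⟩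
      · refine ⟨glued i₀, ⟨hmemG i₀, hpS_in_glued i₀ hi₀⟩, ?_⟩
        rintro l ⟨hl, harc⟩
        rcases Finset.mem_union.1 hl with h | h
        · rcases Finset.mem_union.1 h with h' | h'
          · exact absurd harc (fun hh => MS.uniqPC u v i₀ l h' hi₀ hh)
          · exact absurd ((MY.hCs l h').2 u (mem_cycleArcs_left harc)) (by simpa using hu)
        · obtain ⟨m, -, rfl⟩ := Finset.mem_image.1 h
          rw [hclass m u v] at harc
          rcases harc with h' | ⟨rfl, rfl⟩ | h' | ⟨rfl, rfl⟩
          · rw [MS.uniqPP u v m i₀ h' hi₀]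
          · exact absurd hv (hS.hox (σ1 m))
          · exact absurd hu ((MY.hPsub (σ1 m) u (mem_pArcs_left h')))
          · exact absurd hu (hS.hox m)
      · refine ⟨l₀, ⟨hmemS l₀ hl₀, harc₀⟩, ?_⟩
        rintro l ⟨hl, harc⟩
        rcases Finset.mem_union.1 hl with h | h
        · rcases Finset.mem_union.1 h with h' | h'
          · exact MS.uniqCC u v l l₀ h' hl₀ harc harc₀
          · exact absurd ((MY.hCs l h').2 u (mem_cycleArcs_left harc)) (by simpa using hu)
        · obtain ⟨m, -, rfl⟩ := Finset.mem_image.1 h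
          rw [hclass m u v] at harc
          rcases harc with h' | ⟨rfl, rfl⟩ | h' | ⟨rfl, rfl⟩
          · exact absurd harc₀ (fun hh => MS.uniqPC u v m l₀ hl₀ h' hh)
          · exact absurd hv (hS.hox (σ1 m))
          · exact absurd hu ((MY.hPsub (σ1 m) u (mem_pArcs_left h')))
          · exact absurd hu (hS.hox m)
    · -- u ∈ S, v ∉ S : crossing arc (aa m, bb m)
      obtain ⟨m, rfl, rfl⟩ := hS.ident u v hadj hu hv
      refine ⟨glued (σ2 m), ⟨hmemG (σ2 m), ?_⟩, ?_⟩
      · refine (hclass (σ2 m) _ _).2 (Or.inr (Or.inl ?_))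
        rw [σ12_inv]
        exact ⟨rfl, rfl⟩
      · rintro l ⟨hl, harc⟩
        rcases Finset.mem_union.1 hl with h | h
        · rcases Finset.mem_union.1 h with h' | h'
          · exact absurd ((MS.hCs l h').2 _ (mem_cycleArcs_right harc)) hv
          · exact absurd ((MY.hCs l h').2 _ (mem_cycleArcs_left harc)) (by simpa using hu)
        · obtain ⟨m', -, rfl⟩ := Finset.mem_image.1 h
          rw [hclass m' _ _] at harc
          rcases harc with h' | ⟨he1, he2⟩ | h' | ⟨he1, he2⟩
          · exact absurd (MS.hPsub m' _ (mem_pArcs_right h')) hv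
          · have : σ1 m' = m := idx_unique _ _ he1.symm he2.symm
            have h2 : m' = σ2 m := by rw [← this, σ21_inv]
            rw [h2]
          · exact absurd (MY.hPsub (σ1 m') _ (mem_pArcs_left h')) (by simpa using hu)
          · exact absurd hu (he1 ▸ hS.hox m')
    · -- u ∉ S, v ∈ S : crossing arc (bb m, aa m)
      obtain ⟨m, rfl, rfl⟩ := hY.ident u v hadj (by simpa using hu) (by simpa using hv)
      refine ⟨glued m, ⟨hmemG m, ?_⟩, ?_⟩
      · exact (hclass m _ _).2 (Or.inr (Or.inr (Or.inr ⟨rfl, rfl⟩)))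
      · rintro l ⟨hl, harc⟩
        rcases Finset.mem_union.1 hl with h | h
        · rcases Finset.mem_union.1 h with h' | h'
          · exact absurd ((MS.hCs l h').2 _ (mem_cycleArcs_left harc)) hu
          · exact absurd ((MY.hCs l h').2 _ (mem_cycleArcs_right harc)) (by simpa using hv)
        · obtain ⟨m', -, rfl⟩ := Finset.mem_image.1 h
          rw [hclass m' _ _] at harc
          rcases harc with h' | ⟨he1, he2⟩ | h' | ⟨he1, he2⟩
          · exact absurd (MS.hPsub m' _ (mem_pArcs_left h')) hu
          · exact absurd (he2 ▸ hv) (by simpa using hY.hcx (σ1 m'))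
          · exact absurd (MY.hPsub (σ1 m') _ (mem_pArcs_right h')) (by simpa using hv)
          · have : m' = m := idx_unique _ _ he2.symm he1.symm
            rw [this]
    · -- both outside S
      have hu' : u ∈ Sᶜ := by simpa using hu
      have hv' : v ∈ Sᶜ := by simpa using hv
      rcases MY.cov u v hadj hu' hv' with ⟨j₀, hj₀⟩ | ⟨l₀, hl₀, harc₀⟩
      · have hj₀' : (u, v) ∈ pArcs (MY.P (σ1 (σ2 j₀))) := by rw [σ12_inv]; exact hj₀
        refine ⟨glued (σ2 j₀), ⟨hmemG (σ2 j₀), hpY_in_glued (σ2 j₀) hj₀'⟩, ?_⟩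
        rintro l ⟨hl, harc⟩
        rcases Finset.mem_union.1 hl with h | h
        · rcases Finset.mem_union.1 h with h' | h'
          · exact absurd ((MS.hCs l h').2 u (mem_cycleArcs_left harc)) hu
          · exact absurd harc (fun hh => MY.uniqPC u v j₀ l h' hj₀ hh)
        · obtain ⟨m, -, rfl⟩ := Finset.mem_image.1 h
          rw [hclass m u v] at harc
          rcases harc with h' | ⟨rfl, rfl⟩ | h' | ⟨rfl, rfl⟩
          · exact absurd (MS.hPsub m u (mem_pArcs_left h')) hu
          · exact absurd hu (fun hh => hu (hS.hcx (σ1 m)) )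
          · have : σ1 m = j₀ := MY.uniqPP u v (σ1 m) j₀ h' hj₀
            have h2 : m = σ2 j₀ := by rw [← this, σ21_inv]
            rw [h2]
          · exact absurd hv (fun hh => hv (hS.hcx m))
      · refine ⟨l₀, ⟨hmemY l₀ hl₀, harc₀⟩, ?_⟩
        rintro l ⟨hl, harc⟩
        rcases Finset.mem_union.1 hl with h | h
        · rcases Finset.mem_union.1 h with h' | h'
          · exact absurd ((MS.hCs l h').2 u (mem_cycleArcs_left harc)) hu
          · exact MY.uniqCC u v l l₀ h' hl₀ harc harc₀
        · obtain ⟨m, -, rfl⟩ := Finset.mem_image.1 h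
          rw [hclass m u v] at harc
          rcases harc with h' | ⟨rfl, rfl⟩ | h' | ⟨rfl, rfl⟩
          · exact absurd (MS.hPsub m u (mem_pArcs_left h')) hu
          · exact absurd hu (fun hh => hu (hS.hcx (σ1 m)))
          · exact absurd harc₀ (fun hh => MY.uniqPC u v (σ1 m) l₀ hl₀ h' hh)
          · exact absurd hv (fun hh => hv (hS.hcx m))
  · -- cardinality
    have h1 : CC.card ≤ MS.Cs.card + MY.Cs.card + 3 := by
      calc CC.card ≤ (MS.Cs ∪ MY.Cs).card + (Finset.image glued Finset.univ).card :=
        Finset.card_union_le _ _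
      _ ≤ (MS.Cs.card + MY.Cs.card) + (Finset.image glued Finset.univ).card := by
          exact Nat.add_le_add_right (Finset.card_union_le _ _) _
      _ ≤ (MS.Cs.card + MY.Cs.card) + 3 := by
          refine Nat.add_le_add_left (le_trans Finset.card_image_le ?_) _
          simp
    have h2 := MS.hcard
    have h3 := MY.hcard
    have h4 : S.ncard + Sᶜ.ncard = Nat.card V := Set.ncard_add_ncard_compl S
    omega

end Glue
end CutAux

namespace CutAux
section K4
variable {V : Type} [Finite V] {G : SimpleGraph V} {X : Set V} {c o : Fin 3 → V}

lemma isOCDC_iff {W : Type*} (Gr : SimpleGraph W) (C : Finset (List W)) :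
    IsOCDC Gr C ↔ (∀ l ∈ C, IsDirCycle Gr l) ∧ ∀ u v, Gr.Adj u v →
      ∃ l ∈ C, ((u, v) ∈ cycleArcs l ∧ ∀ l' ∈ C, (u, v) ∈ cycleArcs l' → l' = l) := by
  constructor
  · rintro ⟨h1, h2⟩
    refine ⟨h1, fun u v hadj => ?_⟩
    obtain ⟨l, ⟨hl, harc⟩, huniq⟩ := h2 u v hadj
    exact ⟨l, hl, harc, fun l' hl' harc' => huniq l' ⟨hl', harc'⟩⟩
  · rintro ⟨h1, h2⟩
    refine ⟨h1, fun u v hadj => ?_⟩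
    obtain ⟨l, hl, harc, huniq⟩ := h2 u v hadj
    exact ⟨l, ⟨hl, harc⟩, fun l' ⟨hl', harc'⟩ => huniq l' hl' harc'⟩

def K4C : Finset (List (Fin 4)) :=
  {[0, 1, 2], [0, 2, 3], [0, 3, 1], [1, 3, 2]}

instance : DecidableRel ((⊤ : SimpleGraph (Fin 4)).Adj) :=
  fun a b => decidable_of_iff (a ≠ b) (top_adj a b).symm

instance {W : Type*} [DecidableEq W] {Gr : SimpleGraph W} [DecidableRel Gr.Adj]
    (l : List W) : Decidable (IsDirCycle Gr l) :=
  decidable_of_iff (3 ≤ l.length ∧ l.Nodup ∧ ∀ p ∈ cycleArcs l, Gr.Adj p.1 p.2) Iff.rfl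

lemma K4ocdc : IsOCDC (⊤ : SimpleGraph (Fin 4)) K4C := by
  rw [isOCDC_iff]
  constructor
  · decide
  · decide

lemma K4C_card : K4C.card = 4 := by decide

lemma ocdc_map {W W' : Type*} {H : SimpleGraph W} {H' : SimpleGraph W'} (φ : H ≃g H')
    {C : Finset (List W')} (hC : IsOCDC H' C) :
    ∃ C' : Finset (List W), IsOCDC H C' ∧ C'.card ≤ C.card := by
  classical
  refine ⟨C.image (List.map ⇑φ.symm), ⟨?_, ?_⟩, Finset.card_image_le⟩
  · intro l hl
    obtain ⟨l', hl', rfl⟩ := Finset.mem_image.1 hl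
    obtain ⟨h1, h2, h3⟩ := hC.1 l' hl'
    refine ⟨by simpa using h1, h2.map (φ.symm.toEquiv.injective), ?_⟩
    rintro ⟨u, v⟩ hp
    obtain ⟨x, z, hxz, rfl, rfl⟩ := unmap_cycleArc hp
    exact (φ.symm.map_adj_iff).2 (h3 _ hxz)
  · intro u v hadj
    have hadj' : H'.Adj (φ u) (φ v) := φ.map_adj_iff.2 hadj
    obtain ⟨L, ⟨hL, harc⟩, huniq⟩ := hC.2 _ _ hadj'
    refine ⟨L.map ⇑φ.symm, ⟨Finset.mem_image_of_mem _ hL, ?_⟩, ?_⟩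
    · have := map_cycleArc_mem (f := ⇑φ.symm) harc
      simpa using this
    · rintro l ⟨hl, harcl⟩
      obtain ⟨l', hl', rfl⟩ := Finset.mem_image.1 hl
      obtain ⟨x, z, hxz, he1, he2⟩ := unmap_cycleArc harcl
      have hx : x = φ u := φ.toEquiv.symm_apply_eq.1 he1
      have hz : z = φ v := φ.toEquiv.symm_apply_eq.1 he2
      rw [huniq l' ⟨hl', hx ▸ hz ▸ hxz⟩]

lemma side_K4 (H : SideHyp G X c o)
    (hiso : Nonempty (sideGraph G X c o ≃g (⊤ : SimpleGraph (Fin 4)))) :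
    ∃ C, IsOCDC (sideGraph G X c o) C ∧
      (C.card ≤ X.ncard + 1 ∧ Function.Injective c) := by
  obtain ⟨φ⟩ := hiso
  obtain ⟨C', hC', hcard⟩ := ocdc_map φ K4ocdc
  have hn : Nat.card ↥(insert (o 0) X) = 4 := by
    rw [Nat.card_congr φ.toEquiv]; simp
  have hX3 : X.ncard = 3 := by
    have := side_vertexcard H; omega
  rw [K4C_card] at hcard
  refine ⟨C', hC', by omega, ?_⟩
  intro m m' hmm'
  by_contra hne
  have hcomp : ∀ p q : ↥(insert (o 0) X), p ≠ q → (sideGraph G X c o).Adj p q := by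
    intro p q hpq
    rw [← φ.map_adj_iff]
    simpa using fun h => hpq (φ.toEquiv.injective h)
  obtain ⟨k, hki, hkj, hall⟩ := fin3_third m m' hne
  have hattsub : attS c ⊆ {c m, c k} := by
    rintro x ⟨m₀, rfl⟩
    rcases hall m₀ with rfl | rfl | rfl
    · exact Set.mem_insert _ _
    · exact hmm' ▸ Set.mem_insert _ _
    · exact Set.mem_insert_of_mem _ rfl
  have hatt2 : (attS c).ncard ≤ 2 := by
    refine le_trans (Set.ncard_le_ncard hattsub (Set.toFinite _)) ?_
    refine le_trans (Set.ncard_insert_le _ _) ?_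
    simp
  have hsub : ¬ X ⊆ attS c := by
    intro hsub
    have := Set.ncard_le_ncard hsub (Set.toFinite _)
    omega
  obtain ⟨x, hxX, hxatt⟩ := Set.not_subset.1 hsub
  have hne2 : (⟨x, mem_Xp hxX⟩ : ↥(insert (o 0) X)) ≠ yvert X o := by
    intro h
    have h2 : x = o 0 := congrArg Subtype.val h
    exact H.hox 0 (h2 ▸ hxX)
  have hadj := hcomp _ _ hne2
  rcases hadj.2 with ⟨_, h2, _⟩ | ⟨h1, _⟩ | ⟨_, h2⟩
  · exact H.hox 0 h2
  · exact H.hox 0 (h1 ▸ hxX)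
  · exact hxatt h2

lemma side_ocdc (H : SideHyp G X c o) (hmin : MinimalCounterexample G)
    (hco2 : 2 ≤ Xᶜ.ncard) :
    ∃ C, IsOCDC (sideGraph G X c o) C ∧
      (C.card ≤ X.ncard ∨ (C.card ≤ X.ncard + 1 ∧ Function.Injective c)) := by
  by_cases hK4 : Nonempty (sideGraph G X c o ≃g (⊤ : SimpleGraph (Fin 4)))
  · obtain ⟨C, h1, h2⟩ := side_K4 H hK4
    exact ⟨C, h1, Or.inr h2⟩
  · have hso := hmin.2.2.2.2 _ (sideGraph G X c o) (side_twoConnected H) hK4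
      (side_not_K6 H) (side_card_lt H hco2)
    obtain ⟨C, hC, hcard⟩ := hso
    refine ⟨C, hC, Or.inl ?_⟩
    rw [side_vertexcard H] at hcard
    omega

end K4
end CutAux

open CutAux in
/-- A minimal counterexample to the SOCDC conjecture has no non-trivial edge cut of
size `3`: if exactly three edges cross a nontrivial vertex bipartition `(S, Sᶜ)`, then
one of the two sides is a single vertex. -/
theorem no_nontrivial_three_edge_cut_of_minimalCounterexample {V : Type} [Finite V]
    (G : SimpleGraph V) (h : MinimalCounterexample G) :
    ∀ S : Set V, S.Nonempty → Sᶜ.Nonempty → (crossingEdges G S).ncard = 3 →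
      (∃ w : V, S = {w}) ∨ (∃ w : V, Sᶜ = {w}) := by
  classical
  intro S hSne hScne hcut
  by_contra hcon
  push_neg at hcon
  obtain ⟨hns, hnsc⟩ := hcon
  have hS2 : 2 ≤ S.ncard := by
    have hnt : S.Nontrivial := by
      by_contra hnt
      rw [Set.not_nontrivial_iff] at hnt
      obtain ⟨x, hx⟩ := hSne
      exact hns x (hnt.eq_singleton_of_mem hx)
    obtain ⟨a, ha, b, hb, hab⟩ := hnt
    have := (Set.one_lt_ncard (Set.toFinite S)).2 ⟨a, ha, b, hb, hab⟩
    omega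
  have hSc2 : 2 ≤ Sᶜ.ncard := by
    have hnt : Sᶜ.Nontrivial := by
      by_contra hnt
      rw [Set.not_nontrivial_iff] at hnt
      obtain ⟨x, hx⟩ := hScne
      exact hnsc x (hnt.eq_singleton_of_mem hx)
    obtain ⟨a, ha, b, hb, hab⟩ := hnt
    have := (Set.one_lt_ncard (Set.toFinite Sᶜ)).2 ⟨a, ha, b, hb, hab⟩
    omega
  obtain ⟨E1, E2, E3, h12, h13, h23, hset⟩ := Set.ncard_eq_three.1 hcut
  set ev : Fin 3 → Sym2 V := ![E1, E2, E3] with hev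
  have hevmem : ∀ i, ev i ∈ crossingEdges G S := by
    intro i
    fin_cases i <;> (rw [hset]; simp [hev])
  have hevsurj : ∀ E ∈ crossingEdges G S, ∃ i, E = ev i := by
    intro E hE
    rw [hset] at hE
    rcases hE with rfl | rfl | rfl
    · exact ⟨0, rfl⟩
    · exact ⟨1, rfl⟩
    · exact ⟨2, rfl⟩
  have he0 : ev 0 = E1 := rfl
  have he1 : ev 1 = E2 := rfl
  have he2 : ev 2 = E3 := rfl
  have hevinj : ∀ i j, ev i = ev j → i = j := by
    intro i j hij
    by_contra hne
    have hval : ∀ m : Fin 3, (m = 0 ∨ m = 1 ∨ m = 2) := by decide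
    rcases hval i with rfl | rfl | rfl <;> rcases hval j with rfl | rfl | rfl <;>
      simp only [he0, he1, he2] at hij <;>
      first
        | exact hne rfl
        | exact h12 hij
        | exact h13 hij
        | exact h23 hij
        | exact h12 hij.symm
        | exact h13 hij.symm
        | exact h23 hij.symm
  have hpick : ∀ i, ∃ x y, ev i = s(x, y) ∧ x ∈ S ∧ y ∉ S := by
    intro i
    obtain ⟨-, x, y, hxy, hx, hy⟩ := hevmem i
    exact ⟨x, y, hxy, hx, hy⟩
  choose A B hAB hA hB using hpick
  have hedges : ∀ i, G.Adj (A i) (B i) := by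
    intro i
    have h1 := (hevmem i).1
    rw [hAB i] at h1
    exact G.mem_edgeSet.1 h1
  have hident : ∀ u w, G.Adj u w → u ∈ S → w ∉ S → ∃ i, u = A i ∧ w = B i := by
    intro u w hadj hu hw
    have hcr : s(u, w) ∈ crossingEdges G S := ⟨G.mem_edgeSet.2 hadj, u, w, rfl, hu, hw⟩
    obtain ⟨i, hi⟩ := hevsurj _ hcr
    rw [hAB i, Sym2.eq_iff] at hi
    rcases hi with ⟨h1, h2⟩ | ⟨h1, h2⟩
    · exact ⟨i, h1, h2⟩
    · exact absurd (h1 ▸ hu) (hB i)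
  have HS : SideHyp G S A B :=
    ⟨h.1, hA, hB, hedges, hident, hS2, fun i j hij => hevinj i j (by rw [hAB i, hAB j, hij])⟩
  have hidentY : ∀ u w, G.Adj u w → u ∈ Sᶜ → w ∉ Sᶜ → ∃ i, u = B i ∧ w = A i := by
    intro u w hadj hu hw
    have hwS : w ∈ S := by simpa using hw
    have huS : u ∉ S := hu
    obtain ⟨i, h1, h2⟩ := hident w u hadj.symm hwS huS
    exact ⟨i, h2, h1⟩
  have HY : SideHyp G Sᶜ B A :=
    ⟨h.1, fun i => hB i, fun i => by simpa using hA i, fun i => (hedges i).symm, hidentY,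
      hSc2, fun i j hij => hevinj i j (by
        rw [hAB i, hAB j]
        rw [Sym2.eq_swap (a := A i) (b := B i), Sym2.eq_swap (a := A j) (b := B j)]
        exact hij)⟩
  obtain ⟨CS, hCS, hbS⟩ := side_ocdc HS h hSc2
  obtain ⟨CY, hCY, hbY⟩ := side_ocdc HY h (by rw [compl_compl]; exact hS2)
  obtain ⟨MS⟩ := extract HS hCS hbS σ1 (Or.inl rfl)
  obtain ⟨MY⟩ := extract HY hCY hbY σ2 (Or.inr rfl)
  exact h.2.2.2.1 (glue HS HY MS MY)
end

section
/- If a finite simple graph G has an SOCDC, then for every integer n ≥ 2|V(G)| + 1 the Cartesian product G □ C_n has an SOCDC. -/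
open SimpleGraph

lemma cycleArcs_map {V W : Type*} (f : V → W) (l : List V) :
    cycleArcs (l.map f) = (cycleArcs l).map (Prod.map f f) := by
  unfold cycleArcs
  rw [← List.map_rotate, List.zip_map]

lemma cycleArcs_finRange (m : ℕ) :
    cycleArcs (List.finRange (m+2)) = (List.finRange (m+2)).map (fun i => (i, i + 1)) := by
  apply List.ext_getElem
  · simp [cycleArcs]
  · intro k h1 h2
    simp only [cycleArcs, List.getElem_zip, List.getElem_rotate, List.getElem_map,
      List.getElem_finRange, List.length_finRange, List.length_rotate]
    refine Prod.ext ?_ ?_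
    · rfl
    · simp only [List.length_finRange] at h1 h2 ⊢
      apply Fin.ext
      simp [Fin.add_def]

lemma mem_cycleArcs_finRange_map {W : Type*} {m : ℕ} (f : Fin (m+2) → W) (p : W × W) :
    p ∈ cycleArcs ((List.finRange (m+2)).map f) ↔ ∃ i, p = (f i, f (i+1)) := by
  rw [cycleArcs_map, cycleArcs_finRange, List.map_map]
  simp [List.mem_map, eq_comm, Prod.map]

/-- If `G` has an SOCDC, then for every `n ≥ 2|V(G)| + 1` the Cartesian product
`G □ Cₙ` has an SOCDC. -/
theorem hasSOCDC_boxProd_long_cycle {V : Type} [Finite V] (G : SimpleGraph V)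
    (hG : HasSOCDC G) :
    ∀ n : ℕ, 2 * Nat.card V + 1 ≤ n → HasSOCDC (G □ cycleGraph n) := by
  intro n hn
  classical
  cases isEmpty_or_nonempty V with
  | inl h =>
      refine ⟨∅, ⟨?_, ?_⟩, by simp⟩
      · simp
      · rintro ⟨u, _⟩ _ _
        exact (h.false u).elim
  | inr hne =>
    obtain ⟨C₀, ⟨hcyc, hcov⟩, hcard⟩ := hG
    haveI : Fintype V := Fintype.ofFinite V
    have hM : 1 ≤ Nat.card V := Nat.card_pos
    obtain ⟨m, rfl⟩ : ∃ m, n = m + 2 := ⟨n - 2, by omega⟩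
    have hm1 : 1 ≤ m := by omega
    -- constructions
    set lay : List V → Fin (m+2) → List (V × Fin (m+2)) :=
      fun l j => l.map (fun u => (u, j)) with hlay
    set fwd : V → List (V × Fin (m+2)) :=
      fun v => (List.finRange (m+2)).map (fun i => (v, i)) with hfwd
    set bwd : V → List (V × Fin (m+2)) :=
      fun v => (List.finRange (m+2)).map (fun i => (v, -i)) with hbwd
    set C : Finset (List (V × Fin (m+2))) :=
      ((C₀ ×ˢ (Finset.univ : Finset (Fin (m+2)))).image fun q => lay q.1 q.2) ∪
        (Finset.univ.image fwd ∪ Finset.univ.image bwd) with hC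
    have hmemC : ∀ l', l' ∈ C ↔
        (∃ l₀ ∈ C₀, ∃ j : Fin (m+2), lay l₀ j = l') ∨
          (∃ w : V, fwd w = l') ∨ (∃ w : V, bwd w = l') := by
      intro l'
      simp only [hC, Finset.mem_union, Finset.mem_image, Finset.mem_product, Finset.mem_univ,
        true_and, and_true, Prod.exists]
      constructor
      · rintro (⟨a, b, h1, h2⟩ | h)
        · exact Or.inl ⟨a, h1, b, h2⟩
        · exact Or.inr h
      · rintro (⟨a, h1, b, h2⟩ | h)
        · exact Or.inl ⟨a, b, h1, h2⟩
        · exact Or.inr h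
    -- arc descriptions
    have harc_lay : ∀ (l₀ : List V) (j : Fin (m+2)) (p : (V × Fin (m+2)) × (V × Fin (m+2))),
        p ∈ cycleArcs (lay l₀ j) ↔ ∃ a b, (a, b) ∈ cycleArcs l₀ ∧ p = ((a, j), (b, j)) := by
      intro l₀ j p
      rw [hlay]
      simp only [cycleArcs_map, List.mem_map]
      constructor
      · rintro ⟨⟨x, y⟩, hx, rfl⟩
        exact ⟨x, y, hx, rfl⟩
      · rintro ⟨a, b, hab, rfl⟩
        exact ⟨(a, b), hab, rfl⟩
    have harc_fwd : ∀ (v : V) (p : (V × Fin (m+2)) × (V × Fin (m+2))),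
        p ∈ cycleArcs (fwd v) ↔ ∃ i : Fin (m+2), p = ((v, i), (v, i+1)) := by
      intro v p
      rw [hfwd, mem_cycleArcs_finRange_map]
    have harc_bwd : ∀ (v : V) (p : (V × Fin (m+2)) × (V × Fin (m+2))),
        p ∈ cycleArcs (bwd v) ↔ ∃ i : Fin (m+2), p = ((v, i), (v, i-1)) := by
      intro v p
      rw [hbwd, mem_cycleArcs_finRange_map]
      constructor
      · rintro ⟨i, rfl⟩
        refine ⟨-i, ?_⟩
        have h0 : -(i+1) = -i - 1 := by open Fin.CommRing in ring
        rw [h0]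
      · rintro ⟨i, rfl⟩
        refine ⟨-i, ?_⟩
        have h1 : -(-i) = i := by open Fin.CommRing in ring
        have h2 : -(-i+1) = i - 1 := by open Fin.CommRing in ring
        rw [h1, h2]
    -- adjacency facts in the cycle graph
    have hadj_succ : ∀ i : Fin (m+2), (cycleGraph (m+2)).Adj i (i+1) := by
      intro i
      rw [cycleGraph_adj]
      right
      exact add_sub_cancel_left i 1
    have hadj_pred : ∀ i : Fin (m+2), (cycleGraph (m+2)).Adj i (i-1) := by
      intro i
      rw [cycleGraph_adj]
      left
      exact sub_sub_cancel i 1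
    have hadj_cases : ∀ i j : Fin (m+2), (cycleGraph (m+2)).Adj i j → j = i + 1 ∨ j = i - 1 := by
      intro i j h
      rw [cycleGraph_adj] at h
      rcases h with h | h
      · right; open Fin.CommRing in linear_combination -h
      · left; open Fin.CommRing in linear_combination h
    have hsucc_ne_pred : ∀ i : Fin (m+2), i + 1 ≠ i - 1 := by
      intro i h
      have h2 : (2 : Fin (m+2)) = 0 := by open Fin.CommRing in linear_combination h
      have h3 := congrArg Fin.val h2
      rw [Fin.val_zero] at h3
      have h4 : ((2 : Fin (m+2)) : ℕ) = 2 % (m+2) := rfl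
      rw [Nat.mod_eq_of_lt (by omega)] at h4
      omega
    -- injectivity facts
    have hinj1 : ∀ j : Fin (m+2), Function.Injective (fun u : V => (u, j)) :=
      fun j a b h => congrArg Prod.fst h
    have hinj2 : ∀ v : V, Function.Injective (fun i : Fin (m+2) => ((v, i) : V × Fin (m+2))) :=
      fun v a b h => congrArg Prod.snd h
    have hinj3 : ∀ v : V, Function.Injective (fun i : Fin (m+2) => ((v, -i) : V × Fin (m+2))) :=
      fun v a b h => neg_injective (congrArg Prod.snd h)
    refine ⟨C, ⟨?_, ?_⟩, ?_⟩
    · -- all members are directed cycles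
      intro l hl
      rw [hmemC] at hl
      rcases hl with ⟨l₀, hl₀, j, rfl⟩ | ⟨w, rfl⟩ | ⟨w, rfl⟩
      · obtain ⟨hlen, hnd, hadj⟩ := hcyc l₀ hl₀
        refine ⟨by simpa [hlay] using hlen, ?_, ?_⟩
        · exact hnd.map (hinj1 j)
        · intro p hp
          rw [harc_lay] at hp
          obtain ⟨a, b, hab, rfl⟩ := hp
          rw [boxProd_adj]
          exact Or.inl ⟨hadj (a, b) hab, rfl⟩
      · refine ⟨by simp [hfwd]; omega, (List.nodup_finRange _).map (hinj2 w), ?_⟩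
        intro p hp
        rw [harc_fwd] at hp
        obtain ⟨i, rfl⟩ := hp
        rw [boxProd_adj]
        exact Or.inr ⟨hadj_succ i, rfl⟩
      · refine ⟨by simp [hbwd]; omega, (List.nodup_finRange _).map (hinj3 w), ?_⟩
        intro p hp
        rw [harc_bwd] at hp
        obtain ⟨i, rfl⟩ := hp
        rw [boxProd_adj]
        exact Or.inr ⟨hadj_pred i, rfl⟩
    · -- double cover property
      rintro ⟨a, i⟩ ⟨b, j⟩ hadj
      simp only [boxProd_adj] at hadj
      rcases hadj with ⟨hab, hij⟩ | ⟨hij, hab⟩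
      · -- horizontal arc
        subst hij
        obtain ⟨l₀, ⟨hl₀C, hl₀arc⟩, huniq⟩ := hcov a b hab
        refine ⟨lay l₀ i, ⟨(hmemC _).2 (Or.inl ⟨l₀, hl₀C, i, rfl⟩),
          (harc_lay _ _ _).2 ⟨a, b, hl₀arc, rfl⟩⟩, ?_⟩
        rintro l' ⟨hl'C, hl'arc⟩
        rw [hmemC] at hl'C
        rcases hl'C with ⟨l₁, hl₁, j', rfl⟩ | ⟨w, rfl⟩ | ⟨w, rfl⟩
        · rw [harc_lay] at hl'arc
          obtain ⟨x, y, hxy, heq⟩ := hl'arc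
          simp only [Prod.mk.injEq] at heq
          obtain ⟨⟨hx, hj⟩, hy, -⟩ := heq
          rw [huniq l₁ ⟨hl₁, by rwa [← hx, ← hy] at hxy⟩, ← hj]
        · rw [harc_fwd] at hl'arc
          obtain ⟨k, heq⟩ := hl'arc
          simp only [Prod.mk.injEq] at heq
          exact absurd (heq.1.1.trans heq.2.1.symm) hab.ne
        · rw [harc_bwd] at hl'arc
          obtain ⟨k, heq⟩ := hl'arc
          simp only [Prod.mk.injEq] at heq
          exact absurd (heq.1.1.trans heq.2.1.symm) hab.ne
      · -- vertical arc
        subst hab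
        rcases hadj_cases i j hij with rfl | rfl
        · refine ⟨fwd a, ⟨(hmemC _).2 (Or.inr (Or.inl ⟨a, rfl⟩)),
            (harc_fwd _ _).2 ⟨i, rfl⟩⟩, ?_⟩
          rintro l' ⟨hl'C, hl'arc⟩
          rw [hmemC] at hl'C
          rcases hl'C with ⟨l₁, hl₁, j', rfl⟩ | ⟨w, rfl⟩ | ⟨w, rfl⟩
          · rw [harc_lay] at hl'arc
            obtain ⟨x, y, hxy, heq⟩ := hl'arc
            simp only [Prod.mk.injEq] at heq
            have : G.Adj x y := (hcyc l₁ hl₁).2.2 (x, y) hxy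
            exact absurd (heq.1.1.symm.trans heq.2.1 : x = y) this.ne
          · rw [harc_fwd] at hl'arc
            obtain ⟨k, heq⟩ := hl'arc
            simp only [Prod.mk.injEq] at heq
            rw [← heq.1.1]
          · rw [harc_bwd] at hl'arc
            obtain ⟨k, heq⟩ := hl'arc
            simp only [Prod.mk.injEq] at heq
            obtain ⟨⟨-, hk⟩, -, hk'⟩ := heq
            rw [← hk] at hk'
            exact absurd hk' (hsucc_ne_pred i)
        · refine ⟨bwd a, ⟨(hmemC _).2 (Or.inr (Or.inr ⟨a, rfl⟩)),
            (harc_bwd _ _).2 ⟨i, rfl⟩⟩, ?_⟩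
          rintro l' ⟨hl'C, hl'arc⟩
          rw [hmemC] at hl'C
          rcases hl'C with ⟨l₁, hl₁, j', rfl⟩ | ⟨w, rfl⟩ | ⟨w, rfl⟩
          · rw [harc_lay] at hl'arc
            obtain ⟨x, y, hxy, heq⟩ := hl'arc
            simp only [Prod.mk.injEq] at heq
            have : G.Adj x y := (hcyc l₁ hl₁).2.2 (x, y) hxy
            exact absurd (heq.1.1.symm.trans heq.2.1 : x = y) this.ne
          · rw [harc_fwd] at hl'arc
            obtain ⟨k, heq⟩ := hl'arc
            simp only [Prod.mk.injEq] at heq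
            obtain ⟨⟨-, hk⟩, -, hk'⟩ := heq
            rw [← hk] at hk'
            exact absurd hk'.symm (hsucc_ne_pred i)
          · rw [harc_bwd] at hl'arc
            obtain ⟨k, heq⟩ := hl'arc
            simp only [Prod.mk.injEq] at heq
            rw [← heq.1.1]
    · -- cardinality bound
      have h1 : C.card ≤ C₀.card * (m+2) + (Fintype.card V + Fintype.card V) := by
        refine le_trans (Finset.card_union_le _ _) ?_
        gcongr
        · refine le_trans (Finset.card_image_le) ?_
          rw [Finset.card_product, Finset.card_univ, Fintype.card_fin]
        · refine le_trans (Finset.card_union_le _ _) ?_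
          gcongr <;>
            exact le_trans (Finset.card_image_le) (by rw [Finset.card_univ])
      rw [Nat.card_eq_fintype_card] at hM hcard hn
      rw [Nat.card_eq_fintype_card, Fintype.card_prod, Fintype.card_fin]
      have h2 : (C₀.card + 1) * (m+2) ≤ Fintype.card V * (m+2) :=
        Nat.mul_le_mul_right _ (by omega)
      rw [add_mul, one_mul] at h2
      set X := C₀.card * (m+2)
      set Y := Fintype.card V * (m+2)
      omega
end
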